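/- arXiv:1407.5613 — 12 statements merged into one kernel-verified Lean document; each statement's English description precedes it below -/
import Mathlib

section
/- Let F be a finite field with q elements, n ≥ 2, and let U ⊆ F^n. If for some k with 0 ≤ k ≤ n−2 there exists a (k+1)-dimensional F-linear subspace S of F^n whose corresponding k-subspace at infinity is not determined by U, then |U| ≤ q^(n−1). -/
open Pointwise

/-- The subspace at infinity corresponding to the linear subspace `S ≤ V` is *determined*
by the affine point set `U ⊆ V` if for some `x` the coset `x + S` is affinely spanned by
`U ∩ (x + S)`, i.e. the coset is contained in the affine span of `U ∩ (x + S)`. -/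
def IsDeterminedBy {F V : Type*} [Field F] [AddCommGroup V] [Module F V]
    (U : Set V) (S : Submodule F V) : Prop :=
  ∃ x : V, x +ᵥ (S : Set V) ⊆ (affineSpan F (U ∩ (x +ᵥ (S : Set V))) : Set V)

/-- If `U ⊆ F^n` leaves some `k`-subspace at infinity undetermined
(`0 ≤ k ≤ n-2`), then `|U| ≤ q^(n-1)`. -/
theorem stmt_0 {F : Type*} [Field F] [Fintype F] {q n k : ℕ}
    (hq : Fintype.card F = q) (hn : 2 ≤ n) (hk : k ≤ n - 2)
    (U : Set (Fin n → F)) (S : Submodule F (Fin n → F))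
    (hS : Module.finrank F S = k + 1)
    (hnd : ¬ IsDeterminedBy U S) :
    U.ncard ≤ q ^ (n - 1) := by
  classical
  have hq1 : 1 ≤ q := by
    rw [← hq]; exact Fintype.card_pos
  -- bound on each coset
  have key : ∀ x : Fin n → F,
      (U ∩ (x +ᵥ (S : Set (Fin n → F)))).ncard ≤ q ^ k := by
    intro x
    set T := U ∩ (x +ᵥ (S : Set (Fin n → F))) with hT
    set A := affineSpan F T with hA
    have hTA : T ⊆ (A : Set (Fin n → F)) := subset_affineSpan F T
    have hcoset : (AffineSubspace.mk' x S : Set (Fin n → F)) = x +ᵥ (S : Set (Fin n → F)) := by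
      ext z
      simp only [SetLike.mem_coe, AffineSubspace.mem_mk',
        Set.mem_vadd_set_iff_neg_vadd_mem, vadd_eq_add, vsub_eq_sub]
      rw [neg_add_eq_sub]
    have hAle : A ≤ AffineSubspace.mk' x S := by
      rw [hA, affineSpan_le, hcoset]
      exact Set.inter_subset_right
    have hncov : ¬ (x +ᵥ (S : Set (Fin n → F)) ⊆ (A : Set (Fin n → F))) := by
      intro h
      exact hnd ⟨x, by rw [hA, hT] at h; exact h⟩
    rcases T.eq_empty_or_nonempty with hTe | ⟨p, hp⟩
    · rw [hTe]; simp
    · have hpA : p ∈ A := hTA hp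
      have hdirle : A.direction ≤ S := by
        have := AffineSubspace.direction_le hAle
        rwa [AffineSubspace.direction_mk'] at this
      have hdirlt : A.direction < S := by
        rcases lt_or_eq_of_le hdirle with h | h
        · exact h
        · exfalso
          apply hncov
          have heq : A = AffineSubspace.mk' x S := by
            apply AffineSubspace.ext_of_direction_eq
            · rw [AffineSubspace.direction_mk', h]
            · exact ⟨p, hpA, hAle hpA⟩
          rw [← hcoset, heq]
      have hrank : Module.finrank F A.direction ≤ k := by
        have h1 := Submodule.finrank_lt_finrank_of_lt (K := F) hdirlt
        omega
      -- A ⊆ p +ᵥ direction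
      have hAsub : (A : Set (Fin n → F)) ⊆
          (fun z => p + z) '' (A.direction : Set (Fin n → F)) := by
        intro z hz
        refine ⟨z - p, ?_, by ring⟩
        have := (AffineSubspace.vsub_right_mem_direction_iff_mem hpA z).2 hz
        simpa using this
      calc T.ncard ≤ ((fun z => p + z) '' (A.direction : Set (Fin n → F))).ncard :=
            Set.ncard_le_ncard (hTA.trans hAsub) (Set.toFinite _)
        _ = (A.direction : Set (Fin n → F)).ncard :=
            Set.ncard_image_of_injective _ (add_right_injective p)
        _ = Nat.card A.direction := (Nat.card_coe_set_eq _).symm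
        _ = Fintype.card A.direction := Nat.card_eq_fintype_card
        _ = q ^ Module.finrank F A.direction := by
            rw [Module.card_eq_pow_finrank (K := F), hq]
        _ ≤ q ^ k := Nat.pow_le_pow_right hq1 hrank
  -- counting via the quotient
  have : Fintype ((Fin n → F) ⧸ S) := Fintype.ofFinite ((Fin n → F) ⧸ S)
  let π : (Fin n → F) → ((Fin n → F) ⧸ S) := S.mkQ
  have hfib : ∀ y : ((Fin n → F) ⧸ S),
      ((U.toFinset.filter (fun z => π z = y)) : Set (Fin n → F)).ncard ≤ q ^ k := by
    intro y
    obtain ⟨x, hx⟩ := Submodule.mkQ_surjective S y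
    have hset : ((U.toFinset.filter (fun z => π z = y)) : Set (Fin n → F))
        = U ∩ (x +ᵥ (S : Set (Fin n → F))) := by
      ext z
      simp only [Finset.coe_filter, Set.mem_setOf_eq, Set.mem_toFinset, Set.mem_inter_iff,
        Set.mem_vadd_set_iff_neg_vadd_mem, vadd_eq_add]
      constructor
      · rintro ⟨hzU, hzy⟩
        refine ⟨hzU, ?_⟩
        have h2 : π z = π x := by rw [hzy]; exact hx.symm
        have h3 := (Submodule.Quotient.eq S).1 h2
        simpa [neg_add_eq_sub] using h3
      · rintro ⟨hzU, hzS⟩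
        refine ⟨hzU, ?_⟩
        rw [← hx]
        have h4 : z - x ∈ S := by rwa [neg_add_eq_sub] at hzS
        exact (Submodule.Quotient.eq S).2 h4
    rw [hset]
    exact key x
  have hcount : U.toFinset.card = ∑ y : ((Fin n → F) ⧸ S), (U.toFinset.filter (fun z => π z = y)).card :=
    Finset.card_eq_sum_card_fiberwise (fun x _ => Finset.mem_univ _)
  have hsum : U.toFinset.card ≤ Fintype.card ((Fin n → F) ⧸ S) * q ^ k := by
    rw [hcount]
    calc ∑ y : ((Fin n → F) ⧸ S), (U.toFinset.filter (fun z => π z = y)).card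
        ≤ ∑ _y : ((Fin n → F) ⧸ S), q ^ k := by
          apply Finset.sum_le_sum
          intro y _
          have h5 := hfib y
          rwa [Set.ncard_coe_finset] at h5
      _ = Fintype.card ((Fin n → F) ⧸ S) * q ^ k := by
          rw [Finset.sum_const, smul_eq_mul, Fintype.card]
  have hrankQ : Module.finrank F ((Fin n → F) ⧸ S) = n - (k + 1) := by
    have h1 := Submodule.finrank_quotient_add_finrank S
    rw [hS] at h1
    have h2 : Module.finrank F (Fin n → F) = n := by
      rw [Module.finrank_pi, Fintype.card_fin]
    omega
  have hcardQ : Fintype.card ((Fin n → F) ⧸ S) = q ^ (n - (k + 1)) := by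
    rw [Module.card_eq_pow_finrank (K := F), hq, hrankQ]
  have hfinal : Fintype.card ((Fin n → F) ⧸ S) * q ^ k = q ^ (n - 1) := by
    rw [hcardQ, ← pow_add]
    congr 1
    omega
  rw [Set.ncard_eq_toFinset_card' U]
  rw [hfinal] at hsum
  exact hsum
end

section
/- Let F be a finite field with q elements, n ≥ 2, 0 ≤ k ≤ n−2, and let U ⊆ F^n with |U| = q^(n−1). If S is a (k+1)-dimensional F-linear subspace of F^n whose corresponding k-subspace at infinity is not determined by U, then for every x ∈ F^n there exist a k-dimensional linear subspace D ⊆ S and a point y ∈ x + S such that U ∩ (x + S) = y + D; that is, each of the q^(n−k−1) cosets of S contains exactly q^k points of U constituting one complete affine k-subspace. -/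
open Pointwise

lemma all_eq_of_sum_eq {α : Type*} (s : Finset α) (f : α → ℕ) (m : ℕ)
    (hle : ∀ i ∈ s, f i ≤ m) (hsum : ∑ i ∈ s, f i = s.card * m) :
    ∀ i ∈ s, f i = m := by
  intro i hi
  by_contra hne
  have hlt : f i < m := lt_of_le_of_ne (hle i hi) hne
  have := Finset.sum_lt_sum (g := fun _ => m) hle ⟨i, hi, hlt⟩
  rw [Finset.sum_const, smul_eq_mul, hsum] at this
  exact lt_irrefl _ this

lemma ncard_vadd_submodule {F : Type*} [Field F] [Fintype F] {n : ℕ}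
    (D : Submodule F (Fin n → F)) (y : Fin n → F) :
    (y +ᵥ (D : Set (Fin n → F))).ncard = Fintype.card F ^ Module.finrank F D := by
  classical
  have h1 : (y +ᵥ (D : Set (Fin n → F))) = (fun z => y + z) '' (D : Set (Fin n → F)) := by
    ext z
    constructor
    · rintro ⟨w, hw, rfl⟩
      exact ⟨w, hw, rfl⟩
    · rintro ⟨w, hw, rfl⟩
      exact ⟨w, hw, rfl⟩
  rw [h1, Set.ncard_image_of_injective _ (add_right_injective y),
    ← Nat.card_coe_set_eq, Nat.card_eq_fintype_card]
  exact Module.card_eq_pow_finrank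

lemma key_lemma {F : Type*} [Field F] [Fintype F] {n k : ℕ}
    (U : Set (Fin n → F)) (S : Submodule F (Fin n → F))
    (hS : Module.finrank F S = k + 1) (hnd : ¬ IsDeterminedBy U S)
    (x : Fin n → F) :
    ∃ D : Submodule F (Fin n → F), D ≤ S ∧ Module.finrank F D ≤ k ∧
      (U ∩ (x +ᵥ (S : Set (Fin n → F))) = ∅ ∨
        ∃ y ∈ U ∩ (x +ᵥ (S : Set (Fin n → F))),
          U ∩ (x +ᵥ (S : Set (Fin n → F))) ⊆ y +ᵥ (D : Set (Fin n → F))) := by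
  classical
  set A := U ∩ (x +ᵥ (S : Set (Fin n → F))) with hA
  rcases A.eq_empty_or_nonempty with hAe | ⟨y, hy⟩
  · exact ⟨⊥, bot_le, by simp, Or.inl hAe⟩
  · have hyS : y ∈ x +ᵥ (S : Set (Fin n → F)) := hy.2
    have hsubS : ∀ a ∈ x +ᵥ (S : Set (Fin n → F)), ∀ b ∈ x +ᵥ (S : Set (Fin n → F)),
        a - b ∈ S := by
      intro a ha b hb
      rw [Set.mem_vadd_set_iff_neg_vadd_mem] at ha hb
      have := S.sub_mem ha hb
      simpa [vadd_eq_add, sub_sub_sub_cancel_left] using this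
    refine ⟨vectorSpan F A, ?_, ?_, Or.inr ⟨y, hy, ?_⟩⟩
    · rw [vectorSpan_def, Submodule.span_le]
      rintro v ⟨a, ha, b, hb, rfl⟩
      exact hsubS a ha.2 b hb.2
    · by_contra hgt
      push_neg at hgt
      have hle : vectorSpan F A ≤ S := by
        rw [vectorSpan_def, Submodule.span_le]
        rintro v ⟨a, ha, b, hb, rfl⟩
        exact hsubS a ha.2 b hb.2
      have heq : vectorSpan F A = S :=
        Submodule.eq_of_le_of_finrank_le hle (by omega)
      refine hnd ⟨x, ?_⟩
      intro z hz
      rw [← hA, AffineSubspace.mem_coe]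
      have hyA : y ∈ affineSpan F A := subset_affineSpan F A hy
      rw [← AffineSubspace.vsub_right_mem_direction_iff_mem hyA z,
        direction_affineSpan, heq]
      exact hsubS z hz y hyS
    · intro z hz
      have hzA : z ∈ affineSpan F A := subset_affineSpan F A hz
      have hyA : y ∈ affineSpan F A := subset_affineSpan F A hy
      rw [← AffineSubspace.vsub_right_mem_direction_iff_mem hyA z,
        direction_affineSpan] at hzA
      rw [Set.mem_vadd_set_iff_neg_vadd_mem]
      simpa [vadd_eq_add, neg_add_eq_sub] using hzA

/-- If `|U| = q^(n-1)` and the `k`-subspace at infinity corresponding to `S`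
is not determined by `U`, then every coset `x + S` meets `U` in exactly one complete
affine `k`-subspace. -/
theorem stmt_2 {F : Type*} [Field F] [Fintype F] {q n k : ℕ}
    (hq : Fintype.card F = q) (hn : 2 ≤ n) (hk : k ≤ n - 2)
    (U : Set (Fin n → F)) (hU : U.ncard = q ^ (n - 1))
    (S : Submodule F (Fin n → F)) (hS : Module.finrank F S = k + 1)
    (hnd : ¬ IsDeterminedBy U S) :
    ∀ x : Fin n → F, ∃ D : Submodule F (Fin n → F), D ≤ S ∧ Module.finrank F D = k ∧
      ∃ y ∈ x +ᵥ (S : Set (Fin n → F)),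
        U ∩ (x +ᵥ (S : Set (Fin n → F))) = y +ᵥ (D : Set (Fin n → F)) := by
  classical
  subst hq
  set q := Fintype.card F with hq
  have hq2 : 2 ≤ q := Fintype.one_lt_card
  have hkn : k + 1 ≤ n - 1 := by omega
  -- the quotient
  haveI : Fintype ((Fin n → F) ⧸ S) := Fintype.ofFinite _
  have hrkV : Module.finrank F (Fin n → F) = n := Module.finrank_fin_fun F
  have hrkQ : Module.finrank F ((Fin n → F) ⧸ S) = n - (k + 1) := by
    have := Submodule.finrank_quotient_add_finrank S
    rw [hS, hrkV] at this
    omega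
  have hcardQ : Fintype.card ((Fin n → F) ⧸ S) = q ^ (n - (k + 1)) := by
    rw [Module.card_eq_pow_finrank (K := F), hrkQ]
  set π := S.mkQ with hπ
  have hfiber : ∀ x : Fin n → F, π ⁻¹' {π x} = x +ᵥ (S : Set (Fin n → F)) := by
    intro x
    ext z
    rw [Set.mem_preimage, Set.mem_singleton_iff, Set.mem_vadd_set_iff_neg_vadd_mem]
    rw [hπ, Submodule.mkQ_apply, Submodule.mkQ_apply, Submodule.Quotient.eq,
      vadd_eq_add, neg_add_eq_sub]
    exact Iff.rfl
  -- bound on each fiber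
  have hbound : ∀ x : Fin n → F, (U ∩ (x +ᵥ (S : Set (Fin n → F)))).ncard ≤ q ^ k := by
    intro x
    obtain ⟨D, hDS, hDk, hcases⟩ := key_lemma U S hS hnd x
    rcases hcases with he | ⟨y, _, hsub⟩
    · simp [he]
    · calc (U ∩ (x +ᵥ (S : Set (Fin n → F)))).ncard
          ≤ (y +ᵥ (D : Set (Fin n → F))).ncard := Set.ncard_le_ncard hsub (Set.toFinite _)
        _ = q ^ Module.finrank F D := ncard_vadd_submodule D y
        _ ≤ q ^ k := Nat.pow_le_pow_right (by omega) hDk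
  -- partition sum
  have hUfin : U.Finite := Set.toFinite U
  have hpart : ∑ c : (Fin n → F) ⧸ S, (U ∩ π ⁻¹' {c}).ncard = U.ncard := by
    have hUcoe : U = ↑hUfin.toFinset := (Set.Finite.coe_toFinset hUfin).symm
    conv_rhs => rw [hUcoe]
    rw [Set.ncard_coe_finset,
      Finset.card_eq_sum_card_fiberwise (f := fun z => π z) (fun z _ => Finset.mem_univ (π z))]
    refine Finset.sum_congr rfl fun c _ => ?_
    rw [← Set.ncard_coe_finset (hUfin.toFinset.filter (fun z => π z = c))]
    congr 1
    ext z
    simp only [Finset.coe_filter, Set.Finite.mem_toFinset, Set.mem_setOf_eq,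
      Set.mem_inter_iff, Set.mem_preimage, Set.mem_singleton_iff]
  have hsum : ∑ c : (Fin n → F) ⧸ S, (U ∩ π ⁻¹' {c}).ncard =
      (Finset.univ : Finset ((Fin n → F) ⧸ S)).card * q ^ k := by
    rw [hpart, hU, Finset.card_univ, hcardQ, ← pow_add]
    congr 1
    omega
  have hfib_le : ∀ c : (Fin n → F) ⧸ S, (U ∩ π ⁻¹' {c}).ncard ≤ q ^ k := by
    intro c
    obtain ⟨x, rfl⟩ := Submodule.mkQ_surjective S c
    rw [hfiber x]
    exact hbound x
  have hfib_eq : ∀ c : (Fin n → F) ⧸ S, (U ∩ π ⁻¹' {c}).ncard = q ^ k := by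
    intro c
    exact all_eq_of_sum_eq Finset.univ _ _ (fun i _ => hfib_le i) hsum c (Finset.mem_univ c)
  -- conclusion
  intro x
  have hAcard : (U ∩ (x +ᵥ (S : Set (Fin n → F)))).ncard = q ^ k := by
    rw [← hfiber x]; exact hfib_eq (π x)
  obtain ⟨D, hDS, hDk, hcases⟩ := key_lemma U S hS hnd x
  rcases hcases with he | ⟨y, hy, hsub⟩
  · exfalso
    rw [he, Set.ncard_empty] at hAcard
    have hpos : 0 < q ^ k := pow_pos (by omega) k
    omega
  · have hDcard : (y +ᵥ (D : Set (Fin n → F))).ncard = q ^ Module.finrank F D :=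
      ncard_vadd_submodule D y
    have hle1 : q ^ k ≤ q ^ Module.finrank F D := by
      rw [← hAcard, ← hDcard]
      exact Set.ncard_le_ncard hsub (Set.toFinite _)
    have hfrD : Module.finrank F D = k :=
      le_antisymm hDk (by
        by_contra h
        push_neg at h
        exact absurd (Nat.pow_lt_pow_right (by omega) h) (not_lt.2 hle1))
    have hAeq : U ∩ (x +ᵥ (S : Set (Fin n → F))) = y +ᵥ (D : Set (Fin n → F)) :=
      Set.eq_of_subset_of_ncard_le hsub (by rw [hDcard, hfrD, hAcard]) (Set.toFinite _)
    exact ⟨D, hDS, hfrD, y, hy.2, hAeq⟩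
end

section
/- Let F be a finite field with q elements, m ≥ 2, d ≥ 1, n = m + d, and let U₀ ⊆ F^m with |U₀| = q^(m−1). Let U = U₀ × F^d ⊆ F^m × F^d = F^n be the cylinder (cone) over U₀ with vertex the subspace at infinity corresponding to {0} × F^d. Let π : F^m × F^d → F^m be the projection onto the first factor. Let S ⊆ F^n be an F-linear subspace of dimension r+1 (0 ≤ r ≤ n−2) such that S is not contained in {0} × F^d and such that the projected subspace S₀ = π(S) ⊆ F^m has dimension at most m−1. Then the subspace at infinity corresponding to S is not determined by U if and only if the subspace at infinity corresponding to S₀ is not determined by U₀. -/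
open Pointwise

/-- Membership in a coset of a submodule, in sub form. -/
lemma mem_vadd_submodule_iff {F V : Type*} [Field F] [AddCommGroup V] [Module F V]
    (S : Submodule F V) (x z : V) : z ∈ x +ᵥ (S : Set V) ↔ z - x ∈ S := by
  rw [Set.mem_vadd_set_iff_neg_vadd_mem]
  simp [vadd_eq_add, neg_add_eq_sub]

/-- For the cylinder (cone) `U = U₀ × F^d` over `U₀ ⊆ F^m` with vertex the
subspace at infinity corresponding to `{0} × F^d`, an `r`-subspace at infinity
(corresponding to `S`, not contained in the vertex, projecting to a proper subspace `S₀`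
of `F^m`) is undetermined by `U` iff its projection is undetermined by `U₀`. -/
theorem stmt_3 {F : Type*} [Field F] [Fintype F] {q m d r : ℕ}
    (hq : Fintype.card F = q) (hm : 2 ≤ m) (hd : 1 ≤ d)
    (U₀ : Set (Fin m → F)) (hU₀ : U₀.ncard = q ^ (m - 1))
    (U : Set ((Fin m → F) × (Fin d → F)))
    (hU : U = U₀ ×ˢ (Set.univ : Set (Fin d → F)))
    (S : Submodule F ((Fin m → F) × (Fin d → F)))
    (hr : r ≤ m + d - 2) (hS : Module.finrank F S = r + 1)
    (hSv : ¬ S ≤ Submodule.prod (⊥ : Submodule F (Fin m → F)) (⊤ : Submodule F (Fin d → F)))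
    (S₀ : Submodule F (Fin m → F))
    (hS₀ : S₀ = S.map (LinearMap.fst F (Fin m → F) (Fin d → F)))
    (hdim : Module.finrank F S₀ ≤ m - 1) :
    (¬ IsDeterminedBy U S ↔ ¬ IsDeterminedBy U₀ S₀) := by
  apply not_iff_not.mpr
  subst hU hS₀
  set p := LinearMap.fst F (Fin m → F) (Fin d → F) with hp
  set T := S.map p with hT
  constructor
  · -- forward: determined by U → determined by U₀
    rintro ⟨x, hx⟩
    refine ⟨x.1, ?_⟩
    rintro y hy
    rw [mem_vadd_submodule_iff] at hy
    obtain ⟨s, hs, hps⟩ := Submodule.mem_map.mp hy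
    have hxs : x + s ∈ x +ᵥ (S : Set ((Fin m → F) × (Fin d → F))) := by
      rw [mem_vadd_submodule_iff]; simpa using hs
    have h1 := hx hxs
    have himg : p.toAffineMap '' ((U₀ ×ˢ (Set.univ : Set (Fin d → F))) ∩
          (x +ᵥ (S : Set ((Fin m → F) × (Fin d → F)))))
        ⊆ U₀ ∩ (x.1 +ᵥ (T : Set (Fin m → F))) := by
      rintro _ ⟨z, ⟨hz1, hz2⟩, rfl⟩
      rw [mem_vadd_submodule_iff] at hz2
      refine ⟨hz1.1, ?_⟩
      rw [mem_vadd_submodule_iff]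
      exact ⟨z - x, hz2, by simp [hp]⟩
    have h2 : p.toAffineMap '' ((affineSpan F ((U₀ ×ˢ (Set.univ : Set (Fin d → F))) ∩
          (x +ᵥ (S : Set ((Fin m → F) × (Fin d → F)))))) : Set ((Fin m → F) × (Fin d → F)))
        ⊆ ((affineSpan F (U₀ ∩ (x.1 +ᵥ (T : Set (Fin m → F))))) : Set (Fin m → F)) := by
      rw [← AffineSubspace.coe_map, AffineSubspace.map_span]
      exact affineSpan_mono F himg
    have h3 := h2 ⟨x + s, h1, rfl⟩
    have : p.toAffineMap (x + s) = y := by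
      have : p (x + s) = y := by
        rw [map_add, hps]
        show x.1 + (y - x.1) = y
        abel
      simpa using this
    rwa [this] at h3
  · -- backward: determined by U₀ → determined by U
    rintro ⟨x₀, hx₀⟩
    -- construct a linear map L with (w, L w) ∈ S for all w ∈ T
    have hLex : ∃ L : (Fin m → F) →ₗ[F] (Fin d → F),
        ∀ w ∈ T, ((w, L w) : (Fin m → F) × (Fin d → F)) ∈ S := by
      obtain ⟨T', hT'⟩ := Submodule.exists_isCompl T
      let ψ : S →ₗ[F] T := LinearMap.codRestrict T (p.comp S.subtype)
        (fun s => Submodule.mem_map_of_mem s.2)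
      have hψsurj : LinearMap.range ψ = ⊤ := by
        rw [LinearMap.range_eq_top]
        rintro ⟨t, ht⟩
        obtain ⟨s, hs, rfl⟩ := Submodule.mem_map.mp ht
        exact ⟨⟨s, hs⟩, rfl⟩
      obtain ⟨σ, hσ⟩ := ψ.exists_rightInverse_of_surjective hψsurj
      have hσ' : ∀ t : T, ((σ t : (Fin m → F) × (Fin d → F)).1) = (t : Fin m → F) := by
        intro t
        have h := congrArg (fun f : T →ₗ[F] T => ((f t : T) : Fin m → F)) hσ
        simpa [ψ, hp] using h
      let pr := T.linearProjOfIsCompl T' hT'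
      refine ⟨(LinearMap.snd F (Fin m → F) (Fin d → F)).comp (S.subtype.comp (σ.comp pr)), ?_⟩
      intro w hw
      have hpr : pr w = ⟨w, hw⟩ := Submodule.linearProjOfIsCompl_apply_left hT' ⟨w, hw⟩
      have heq : ((w, ((σ (pr w) : S) : (Fin m → F) × (Fin d → F)).2) :
          (Fin m → F) × (Fin d → F)) = ((σ (pr w) : S) : (Fin m → F) × (Fin d → F)) := by
        refine Prod.ext ?_ rfl
        rw [hpr, hσ' ⟨w, hw⟩]
      show ((w, ((σ (pr w) : S) : (Fin m → F) × (Fin d → F)).2) :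
          (Fin m → F) × (Fin d → F)) ∈ S
      rw [heq]
      exact (σ (pr w) : S).2
    obtain ⟨L, hL⟩ := hLex
    set x : (Fin m → F) × (Fin d → F) := (x₀, 0) with hxdef
    set g : (Fin m → F) →ₗ[F] (Fin m → F) × (Fin d → F) := LinearMap.prod LinearMap.id L with hg
    set f : (Fin m → F) →ᵃ[F] (Fin m → F) × (Fin d → F) :=
      { toFun := fun u => (u, L (u - x₀))
        linear := g
        map_vadd' := by
          intro pt v
          simp only [vadd_eq_add]
          refine Prod.ext rfl ?_
          show L (v + pt - x₀) = L v + L (pt - x₀)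
          rw [show v + pt - x₀ = v + (pt - x₀) by abel, map_add] } with hf
    have hfap : ∀ u, f u = (u, L (u - x₀)) := fun u => rfl
    set A := (U₀ ×ˢ (Set.univ : Set (Fin d → F))) ∩
      (x +ᵥ (S : Set ((Fin m → F) × (Fin d → F)))) with hA
    set TA := affineSpan F A with hTA
    set B := U₀ ∩ (x₀ +ᵥ (T : Set (Fin m → F))) with hB
    -- step 1
    have step1 : f '' B ⊆ A := by
      rintro _ ⟨u, ⟨hu1, hu2⟩, rfl⟩
      rw [mem_vadd_submodule_iff] at hu2
      refine ⟨⟨hu1, trivial⟩, ?_⟩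
      rw [mem_vadd_submodule_iff, hfap]
      have : ((u, L (u - x₀)) : (Fin m → F) × (Fin d → F)) - x = (u - x₀, L (u - x₀)) := by
        refine Prod.ext rfl ?_
        show L (u - x₀) - 0 = L (u - x₀)
        simp
      rw [this]
      exact hL _ hu2
    -- step 2
    have step2 : ∀ u ∈ x₀ +ᵥ (T : Set (Fin m → F)), f u ∈ TA := by
      intro u hu
      have h1 : u ∈ ((affineSpan F B) : Set (Fin m → F)) := hx₀ hu
      have h2 : f '' ((affineSpan F B) : Set (Fin m → F)) ⊆ (TA : Set _) := by
        rw [← AffineSubspace.coe_map, AffineSubspace.map_span]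
        exact affineSpan_mono F step1
      exact h2 ⟨u, h1, rfl⟩
    -- step 3: B nonempty
    have hx₀T : x₀ ∈ x₀ +ᵥ (T : Set (Fin m → F)) := by
      rw [mem_vadd_submodule_iff]; simp
    obtain ⟨u', hu'⟩ : B.Nonempty := by
      rw [← affineSpan_nonempty (k := F)]
      exact ⟨x₀, hx₀ hx₀T⟩
    have hu'T : u' ∈ x₀ +ᵥ (T : Set (Fin m → F)) := hu'.2
    -- step 4
    have step4 : ∀ k : Fin d → F, ((0, k) : (Fin m → F) × (Fin d → F)) ∈ S →
        ((0, k) : (Fin m → F) × (Fin d → F)) ∈ TA.direction := by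
      intro k hk
      have h1 : f u' ∈ TA := step2 u' hu'T
      have h2 : f u' + (0, k) ∈ TA := by
        apply subset_affineSpan F A
        have hu2 := hu'.2
        rw [mem_vadd_submodule_iff] at hu2
        refine ⟨⟨?_, trivial⟩, ?_⟩
        · show u' + 0 ∈ U₀
          simpa using hu'.1
        rw [mem_vadd_submodule_iff, hfap]
        have : ((u', L (u' - x₀)) : (Fin m → F) × (Fin d → F)) + (0, k) - x
            = (u' - x₀, L (u' - x₀)) + (0, k) := by
          refine Prod.ext ?_ ?_
          · show u' + 0 - x₀ = u' - x₀ + 0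
            abel
          · show L (u' - x₀) + k - 0 = L (u' - x₀) + k
            simp
        rw [this]
        exact S.add_mem (hL _ hu2) hk
      have h3 := AffineSubspace.vsub_mem_direction h2 h1
      have : f u' + (0, k) -ᵥ f u' = ((0, k) : (Fin m → F) × (Fin d → F)) := by
        rw [vsub_eq_sub]; abel
      rwa [this] at h3
    -- step 5: conclude
    refine ⟨x, ?_⟩
    rintro z hz
    rw [mem_vadd_submodule_iff] at hz
    set s : (Fin m → F) × (Fin d → F) := z - x with hsdef
    have haT : s.1 ∈ T := ⟨s, hz, rfl⟩
    have h1 : f (x₀ + s.1) ∈ TA := by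
      apply step2
      rw [mem_vadd_submodule_iff]
      simpa using haT
    have hgmem : ((s.1, L s.1) : (Fin m → F) × (Fin d → F)) ∈ S := hL _ haT
    have hker : ((0, s.2 - L s.1) : (Fin m → F) × (Fin d → F)) ∈ S := by
      have h := S.sub_mem hz hgmem
      have : s - (s.1, L s.1) = ((0, s.2 - L s.1) : (Fin m → F) × (Fin d → F)) := by
        refine Prod.ext ?_ rfl
        show s.1 - s.1 = 0
        simp
      rwa [this] at h
    have h2 := AffineSubspace.vadd_mem_of_mem_direction (step4 _ hker) h1
    have heq : ((0, s.2 - L s.1) : (Fin m → F) × (Fin d → F)) +ᵥ f (x₀ + s.1) = z := by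
      rw [hfap]
      have h3 : x₀ + s.1 - x₀ = s.1 := by abel
      rw [h3]
      have hz' : z = x + s := by rw [hsdef]; abel
      rw [hz']
      refine Prod.ext ?_ ?_
      · show 0 + (x₀ + s.1) = x₀ + s.1
        simp
      · show s.2 - L s.1 + L s.1 = 0 + s.2
        abel
    rwa [heq] at h2
end

section
/- Let F be a finite field with q elements, n ≥ 3, and let U ⊆ F^n with |U| = q^(n−1). Let k be an integer with 0 ≤ k ≤ n−3. If S is a (k+1)-dimensional F-linear subspace of F^n whose corresponding k-subspace at infinity is determined by U, then there exists a (k+2)-dimensional F-linear subspace S' with S ⊆ S' whose corresponding (k+1)-subspace at infinity is also determined by U. -/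
open Pointwise

/-- If `|U| = q^(n-1)` and `U` determines the `k`-subspace at infinity
corresponding to `S` (`k ≤ n-3`), then it also determines some `(k+1)`-subspace at
infinity through it. -/
theorem stmt_4 {F : Type*} [Field F] [Fintype F] {q n k : ℕ}
    (hq : Fintype.card F = q) (hn : 3 ≤ n) (hk : k ≤ n - 3)
    (U : Set (Fin n → F)) (hU : U.ncard = q ^ (n - 1))
    (S : Submodule F (Fin n → F)) (hS : Module.finrank F S = k + 1)
    (hdet : IsDeterminedBy U S) :
    ∃ S' : Submodule F (Fin n → F), S ≤ S' ∧ Module.finrank F S' = k + 2 ∧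
      IsDeterminedBy U S' := by
  classical
  obtain ⟨x, hx⟩ := hdet
  have hq2 : 2 ≤ q := by rw [← hq]; exact Fintype.one_lt_card
  -- cardinality of the coset x + S
  have hScard : (x +ᵥ (S : Set (Fin n → F))).ncard = q ^ (k + 1) := by
    rw [Set.ncard_vadd_set]
    have h1 : (S : Set (Fin n → F)).ncard = Nat.card S := (Nat.card_coe_set_eq _).symm
    have : Fintype S := Fintype.ofFinite _
    rw [h1, Nat.card_eq_fintype_card, Module.card_eq_pow_finrank (K := F) (V := S), hS, hq]
  -- find a point of U outside x + S
  have hlt : (x +ᵥ (S : Set (Fin n → F))).ncard < U.ncard := by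
    rw [hScard, hU]
    exact Nat.pow_lt_pow_right hq2 (by omega)
  obtain ⟨u, huU, huS⟩ : ∃ u ∈ U, u ∉ x +ᵥ (S : Set (Fin n → F)) := by
    by_contra h
    push_neg at h
    exact absurd (Set.ncard_le_ncard h (Set.toFinite _)) (by omega)
  have hux : u - x ∉ S := by
    intro hmem
    exact huS ⟨u - x, hmem, by simp⟩
  have hux0 : u - x ≠ 0 := fun h => hux (h ▸ S.zero_mem)
  set T : Submodule F (Fin n → F) := Submodule.span F {u - x} with hT
  refine ⟨S ⊔ T, le_sup_left, ?_, ?_⟩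
  · -- dimension count
    have hinf : S ⊓ T = ⊥ := by
      rw [eq_bot_iff]
      rintro v ⟨hvS, hvT⟩
      obtain ⟨c, rfl⟩ := Submodule.mem_span_singleton.mp hvT
      rcases eq_or_ne c 0 with rfl | hc
      · simp
      · exact absurd (by simpa [hc] using S.smul_mem c⁻¹ hvS) hux
    have hTrank : Module.finrank F T = 1 := finrank_span_singleton hux0
    have := Submodule.finrank_sup_add_finrank_inf_eq S T
    rw [hinf, hS, hTrank] at this
    simpa using this
  · refine ⟨x, ?_⟩
    set A := affineSpan F (U ∩ (x +ᵥ ((S ⊔ T : Submodule F (Fin n → F)) : Set (Fin n → F))))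
    have hsub : (S : Set (Fin n → F)) ⊆ ((S ⊔ T : Submodule F (Fin n → F)) : Set (Fin n → F)) :=
      fun v hv => (le_sup_left : S ≤ S ⊔ T) hv
    have hmono : x +ᵥ (S : Set (Fin n → F)) ⊆
        x +ᵥ ((S ⊔ T : Submodule F (Fin n → F)) : Set (Fin n → F)) :=
      Set.vadd_set_mono hsub
    have hxS_A : x +ᵥ (S : Set (Fin n → F)) ⊆ (A : Set (Fin n → F)) :=
      hx.trans (affineSpan_mono F (Set.inter_subset_inter_right U hmono))
    have huS' : u ∈ x +ᵥ ((S ⊔ T : Submodule F (Fin n → F)) : Set (Fin n → F)) :=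
      ⟨u - x, (le_sup_right : T ≤ S ⊔ T) (Submodule.mem_span_singleton_self _), by simp⟩
    have hu_A : u ∈ A := subset_affineSpan F _ ⟨huU, huS'⟩
    rintro p ⟨w, hw, rfl⟩
    show x +ᵥ (w) ∈ (A : Set _)
    obtain ⟨s, hs, t, ht, rfl⟩ := Submodule.mem_sup.mp hw
    obtain ⟨c, rfl⟩ := Submodule.mem_span_singleton.mp ht
    have hxs_A : x + s ∈ A := hxS_A ⟨s, hs, by simp⟩
    have hx_A : x ∈ A := hxS_A ⟨0, S.zero_mem, by simp⟩
    have key : c • (u -ᵥ x) +ᵥ (x + s) ∈ A :=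
      AffineSubspace.smul_vsub_vadd_mem A c hu_A hx_A hxs_A
    have : x +ᵥ (s + c • (u - x)) = c • (u -ᵥ x) +ᵥ (x + s) := by
      simp only [vsub_eq_sub, vadd_eq_add]
      ring_nf
    rwa [this]
end

section
/- Let F be a finite field with q elements, n ≥ 3, and let U ⊆ F^n with |U| = q^(n−1). Let k be an integer with 0 ≤ k ≤ n−3. If S is a (k+1)-dimensional F-linear subspace of F^n whose corresponding k-subspace at infinity is determined by U, then there exists an (n−1)-dimensional F-linear subspace S' with S ⊆ S' whose corresponding (n−2)-subspace at infinity is determined by U. -/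
open Pointwise

/-- One-step extension: if `U` has more points than a coset of `S` and `U` determines `S`,
then some overspace of `S` of one more dimension is also determined by `U`. -/
lemma isDeterminedBy_step {F : Type*} [Field F] [Fintype F] {n : ℕ}
    (U : Set (Fin n → F)) (S : Submodule F (Fin n → F))
    (hcard : ((S : Set (Fin n → F))).ncard < U.ncard)
    (hdet : IsDeterminedBy U S) :
    ∃ T : Submodule F (Fin n → F), S ≤ T ∧
      Module.finrank F T = Module.finrank F S + 1 ∧ IsDeterminedBy U T := by
  obtain ⟨x, hx⟩ := hdet
  have hne : ¬ U ⊆ x +ᵥ (S : Set (Fin n → F)) := by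
    intro h
    have : U.ncard ≤ (x +ᵥ (S : Set (Fin n → F))).ncard :=
      Set.ncard_le_ncard h (Set.toFinite _)
    rw [Set.ncard_vadd_set] at this
    omega
  obtain ⟨u, huU, hux⟩ := Set.not_subset.1 hne
  have huxS : u - x ∉ S := fun h => hux ⟨u - x, h, by simp⟩
  have hne0 : u - x ≠ 0 := fun h => huxS (h ▸ S.zero_mem)
  set T := S ⊔ F ∙ (u - x) with hT
  have hST : S ≤ T := le_sup_left
  have huxT : u - x ∈ T := Submodule.mem_sup_right (Submodule.mem_span_singleton_self _)
  refine ⟨T, hST, ?_, ?_⟩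
  · have hd : Disjoint S (F ∙ (u - x)) :=
      (Submodule.disjoint_span_singleton' hne0).mpr huxS
    have := Submodule.finrank_sup_add_finrank_inf_eq S (F ∙ (u - x))
    rw [hd.eq_bot, finrank_bot, finrank_span_singleton hne0, ← hT] at this
    omega
  · refine ⟨x, ?_⟩
    set A := affineSpan F (U ∩ (x +ᵥ (T : Set (Fin n → F))))
    have hsub : (affineSpan F (U ∩ (x +ᵥ (S : Set (Fin n → F)))) : Set (Fin n → F)) ⊆ A := by
      apply affineSpan_mono
      exact Set.inter_subset_inter_right _ (Set.vadd_set_mono (SetLike.coe_subset_coe.2 hST))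
    have hxA : x ∈ A := hsub (hx ⟨0, S.zero_mem, by simp⟩)
    have huA : u ∈ A := subset_affineSpan _ _ ⟨huU, ⟨u - x, huxT, by simp⟩⟩
    have hSdir : ∀ s ∈ S, s ∈ A.direction := by
      intro s hs
      have hxsA : x + s ∈ A := hsub (hx ⟨s, hs, by simp [add_comm]⟩)
      have := AffineSubspace.vsub_mem_direction hxsA hxA
      simpa using this
    have hTdir : (T : Set (Fin n → F)) ⊆ (A.direction : Set (Fin n → F)) := by
      rw [hT]
      intro t ht
      rcases Submodule.mem_sup.1 ht with ⟨s, hs, c, hc, rfl⟩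
      refine A.direction.add_mem (hSdir s hs) ?_
      rcases Submodule.mem_span_singleton.1 hc with ⟨a, rfl⟩
      refine A.direction.smul_mem a ?_
      have := AffineSubspace.vsub_mem_direction huA hxA
      simpa using this
    rintro y ⟨t, ht, rfl⟩
    simpa [add_comm] using AffineSubspace.vadd_mem_of_mem_direction (hTdir ht) hxA

/-- If `|U| = q^(n-1)` and `U` determines the `k`-subspace at infinity
corresponding to `S` (`k ≤ n-3`), then there is a determined `(n-2)`-subspace at
infinity through it. -/
theorem stmt_5 {F : Type*} [Field F] [Fintype F] {q n k : ℕ}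
    (hq : Fintype.card F = q) (hn : 3 ≤ n) (hk : k ≤ n - 3)
    (U : Set (Fin n → F)) (hU : U.ncard = q ^ (n - 1))
    (S : Submodule F (Fin n → F)) (hS : Module.finrank F S = k + 1)
    (hdet : IsDeterminedBy U S) :
    ∃ S' : Submodule F (Fin n → F), S ≤ S' ∧ Module.finrank F S' = n - 1 ∧
      IsDeterminedBy U S' := by
  have hq2 : 2 ≤ q := hq ▸ Fintype.one_lt_card
  have key : ∀ m : ℕ, ∀ S : Submodule F (Fin n → F),
      Module.finrank F S + m = n - 1 → IsDeterminedBy U S →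
      ∃ S' : Submodule F (Fin n → F), S ≤ S' ∧ Module.finrank F S' = n - 1 ∧
        IsDeterminedBy U S' := by
    intro m
    induction m with
    | zero => exact fun S hfr hd => ⟨S, le_rfl, by omega, hd⟩
    | succ m ih =>
      intro S hfr hd
      have hcard : ((S : Set (Fin n → F))).ncard < U.ncard := by
        classical
        have : ((S : Set (Fin n → F))).ncard = q ^ Module.finrank F S := by
          rw [← Nat.card_coe_set_eq, Nat.card_eq_fintype_card]
          rw [← hq]
          exact Module.card_eq_pow_finrank (K := F) (V := S)
        rw [this, hU]
        exact Nat.pow_lt_pow_right (by omega) (by omega)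
      obtain ⟨T, hST, hTfr, hTd⟩ := isDeterminedBy_step U S hcard hd
      obtain ⟨S', h1, h2, h3⟩ := ih T (by omega) hTd
      exact ⟨S', le_trans hST h1, h2, h3⟩
  exact key (n - 1 - (k + 1)) S (by omega) hdet
end

section
/- Let F be a finite field with q elements, n ≥ 3, and let U ⊆ F^n with |U| = q^(n−1). Let k be an integer with 0 ≤ k ≤ n−3, and let V be an (n−1)-dimensional F-linear subspace of F^n. If every (k+1)-dimensional F-linear subspace contained in V corresponds to a k-subspace at infinity determined by U, then the (n−2)-subspace at infinity corresponding to V is determined by U as well. -/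
open Pointwise

open Set Module Submodule

section Aux

lemma ncard_biUnion_le' {α ι : Type*} (t : Finset ι) (s : ι → Set α) :
    (⋃ i ∈ t, s i).ncard ≤ ∑ i ∈ t, (s i).ncard := by
  classical
  induction t using Finset.induction with
  | empty => simp
  | insert a t' h ih =>
    rw [Finset.set_biUnion_insert, Finset.sum_insert h]
    exact (Set.ncard_union_le _ _).trans (by gcongr)

variable {F M : Type*} [Field F] [AddCommGroup M] [Module F M]

lemma coe_mk'_eq (x : M) (S : Submodule F M) :
    (AffineSubspace.mk' x S : Set M) = x +ᵥ (S : Set M) := by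
  ext a
  rw [SetLike.mem_coe, AffineSubspace.mem_mk', Set.mem_vadd_set]
  constructor
  · intro h
    refine ⟨a - x, h, ?_⟩
    simp only [vadd_eq_add]
    abel
  · rintro ⟨b, hb, rfl⟩
    simpa [vsub_eq_sub] using hb

lemma vadd_coset_eq {x y : M} (S : Submodule F M) (h : x - y ∈ S) :
    x +ᵥ (S : Set M) = y +ᵥ (S : Set M) := by
  have hy : y ∈ AffineSubspace.mk' x (S : Submodule F M) := by
    rw [AffineSubspace.mem_mk', vsub_eq_sub]
    simpa using S.neg_mem h
  have key : AffineSubspace.mk' x S = AffineSubspace.mk' y S :=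
    calc AffineSubspace.mk' x (S : Submodule F M)
        = AffineSubspace.mk' y (AffineSubspace.mk' x (S : Submodule F M)).direction :=
          (AffineSubspace.mk'_eq hy).symm
      _ = AffineSubspace.mk' y S := by rw [AffineSubspace.direction_mk']
  rw [← coe_mk'_eq, ← coe_mk'_eq, key]

lemma exists_intermediate [FiniteDimensional F M] (d : ℕ) :
    ∀ (S V : Submodule F M), S ≤ V → finrank F S + d ≤ finrank F V →
      ∃ T, S ≤ T ∧ T ≤ V ∧ finrank F T = finrank F S + d := by
  induction d with
  | zero => exact fun S V hSV _ => ⟨S, le_rfl, hSV, by simp⟩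
  | succ d ih =>
    intro S V hSV hle
    have hlt : S < V := lt_of_le_of_ne hSV (by rintro rfl; omega)
    obtain ⟨x, hxV, hxS⟩ := SetLike.exists_of_lt hlt
    have hx0 : x ≠ 0 := by rintro rfl; exact hxS S.zero_mem
    have hinf : S ⊓ (F ∙ x) = ⊥ := by
      rw [eq_bot_iff]
      rintro z ⟨hzS, hzx⟩
      obtain ⟨c, rfl⟩ := mem_span_singleton.mp hzx
      rcases eq_or_ne c 0 with rfl | hc
      · simp
      · exact absurd (by simpa [hc] using S.smul_mem c⁻¹ hzS) hxS
    have hsup : finrank F ↥(S ⊔ (F ∙ x)) = finrank F S + 1 := by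
      have := Submodule.finrank_sup_add_finrank_inf_eq S (F ∙ x)
      rw [hinf, finrank_bot, finrank_span_singleton hx0] at this
      omega
    obtain ⟨T, h1, h2, h3⟩ := ih (S ⊔ (F ∙ x)) V
      (sup_le hSV ((span_le).mpr (by simpa using hxV))) (by omega)
    exact ⟨T, le_trans le_sup_left h1, h2, by omega⟩

variable [Fintype F]

lemma natCard_submodule [Finite M] (p : Submodule F M) :
    Nat.card p = Fintype.card F ^ finrank F p := by
  have : Fintype p := Fintype.ofFinite _
  rw [Nat.card_eq_fintype_card]
  exact card_eq_pow_finrank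

lemma exists_avoid [Finite M] [FiniteDimensional F M] {ι : Type*} [Fintype ι]
    (V : Submodule F M) (hV1 : 1 ≤ finrank F V)
    (hι : Fintype.card ι ≤ Fintype.card F)
    (D : ι → Submodule F M) (hD : ∀ i, D i < V) :
    ∃ v ∈ V, ∀ i, v ∉ D i := by
  classical
  by_contra hcon
  push_neg at hcon
  set q := Fintype.card F with hq
  have hq2 : 2 ≤ q := Fintype.one_lt_card
  set m := finrank F V with hm
  have hVsub : (V : Set M) ⊆ {0} ∪ ⋃ i ∈ (Finset.univ : Finset ι), ((D i : Set M) \ {0}) := by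
    intro v hv
    rcases eq_or_ne v 0 with rfl | hv0
    · exact Set.mem_union_left _ rfl
    · obtain ⟨i, hi⟩ := hcon v hv
      exact Set.mem_union_right _ (Set.mem_biUnion (Finset.mem_univ i) ⟨hi, hv0⟩)
  have hfin : ∀ s : Set M, s.Finite := fun s => s.toFinite
  have hVcard : (V : Set M).ncard = q ^ m := by
    rw [← Nat.card_coe_set_eq]
    have : Nat.card (V : Set M) = Nat.card V := rfl
    rw [this, natCard_submodule]
  have hDcard : ∀ i, ((D i : Set M) \ {0}).ncard ≤ q ^ (m - 1) - 1 := by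
    intro i
    have h0 : (0 : M) ∈ (D i : Set M) := (D i).zero_mem
    rw [Set.ncard_diff_singleton_of_mem h0]
    have hcardD : (D i : Set M).ncard = q ^ finrank F (D i) := by
      rw [← Nat.card_coe_set_eq]
      have : Nat.card (D i : Set M) = Nat.card (D i) := rfl
      rw [this, natCard_submodule]
    have hlt : finrank F (D i) < m := Submodule.finrank_lt_finrank_of_lt (hD i)
    have : (D i : Set M).ncard ≤ q ^ (m - 1) := by
      rw [hcardD]
      exact Nat.pow_le_pow_right (by omega) (by omega)
    omega
  have hchain : q ^ m ≤ 1 + Fintype.card ι * (q ^ (m - 1) - 1) := by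
    calc q ^ m = (V : Set M).ncard := hVcard.symm
      _ ≤ ({0} ∪ ⋃ i ∈ (Finset.univ : Finset ι), ((D i : Set M) \ {0})).ncard :=
          Set.ncard_le_ncard hVsub (hfin _)
      _ ≤ ({(0:M)} : Set M).ncard + (⋃ i ∈ (Finset.univ : Finset ι), ((D i : Set M) \ {0})).ncard :=
          Set.ncard_union_le _ _
      _ ≤ 1 + ∑ i ∈ Finset.univ, ((D i : Set M) \ {0}).ncard := by
          have := ncard_biUnion_le' (Finset.univ : Finset ι) (fun i => (D i : Set M) \ {0})
          simpa using this
      _ ≤ 1 + ∑ _i ∈ (Finset.univ : Finset ι), (q ^ (m - 1) - 1) := by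
          gcongr with i
          exact hDcard i
      _ = 1 + Fintype.card ι * (q ^ (m - 1) - 1) := by
          rw [Finset.sum_const, smul_eq_mul, Finset.card_univ]
  have hQ1 : 1 ≤ q ^ (m - 1) := Nat.one_le_pow _ _ (by omega)
  have hqm : q ^ m = q * q ^ (m - 1) := by
    conv_lhs => rw [show m = (m - 1) + 1 by omega]
    ring
  have h2 : 1 + Fintype.card ι * (q ^ (m - 1) - 1) ≤ 1 + q * (q ^ (m - 1) - 1) := by
    gcongr
  have h3 : q * (q ^ (m-1) - 1) = q * q ^ (m-1) - q := by
    rw [Nat.mul_sub]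
    ring_nf
  have hqle : q ≤ q * q ^ (m - 1) := Nat.le_mul_of_pos_right _ (by omega)
  omega

end Aux


/-- If `|U| = q^(n-1)` and all `k`-subspaces at infinity inside the
`(n-2)`-subspace at infinity corresponding to `V` are determined by `U` (`k ≤ n-3`),
then that `(n-2)`-subspace is determined as well. -/
theorem stmt_6 {F : Type*} [Field F] [Fintype F] {q n k : ℕ}
    (hq : Fintype.card F = q) (hn : 3 ≤ n) (hk : k ≤ n - 3)
    (U : Set (Fin n → F)) (hU : U.ncard = q ^ (n - 1))
    (V : Submodule F (Fin n → F)) (hV : Module.finrank F V = n - 1)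
    (hall : ∀ T : Submodule F (Fin n → F), T ≤ V → Module.finrank F T = k + 1 →
      IsDeterminedBy U T) :
    IsDeterminedBy U V := by
  classical
  by_contra hnd
  simp only [IsDeterminedBy, not_exists] at hnd
  have hfinE : finrank F (Fin n → F) = n := Module.finrank_fin_fun F
  set A : (Fin n → F) → AffineSubspace F (Fin n → F) :=
    fun x => affineSpan F (U ∩ (x +ᵥ (V : Set (Fin n → F)))) with hA
  set D : (Fin n → F) → Submodule F (Fin n → F) := fun x => (A x).direction with hD
  -- every direction is a proper subspace of V
  have hDlt : ∀ x, D x < V := by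
    intro x
    have hAle : A x ≤ AffineSubspace.mk' x V :=
      affineSpan_le.mpr (by rw [coe_mk'_eq]; exact Set.inter_subset_right)
    have hDle : D x ≤ V := by
      have := AffineSubspace.direction_le hAle
      rwa [AffineSubspace.direction_mk'] at this
    refine lt_of_le_of_ne hDle fun hEq => ?_
    rcases (U ∩ (x +ᵥ (V : Set (Fin n → F)))).eq_empty_or_nonempty with he | ⟨u, hu⟩
    · have hbot : D x = ⊥ := by
        rw [hD]
        simp only [hA, he]
        rw [AffineSubspace.span_empty, AffineSubspace.direction_bot]
      rw [hbot] at hEq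
      have : finrank F V = 0 := by rw [← hEq]; exact finrank_bot F _
      omega
    · have heq : A x = AffineSubspace.mk' x V := by
        refine AffineSubspace.ext_of_direction_eq ?_ ⟨u, ?_, ?_⟩
        · rw [AffineSubspace.direction_mk']; exact hEq
        · exact subset_affineSpan F _ hu
        · show u ∈ (AffineSubspace.mk' x V : Set (Fin n → F))
          rw [coe_mk'_eq]; exact hu.2
      refine hnd x ?_
      show x +ᵥ (V : Set (Fin n → F)) ⊆ (A x : Set (Fin n → F))
      rw [heq, coe_mk'_eq]
  -- the quotient has q elements
  have hQfin : Finite ((Fin n → F) ⧸ V) := Quotient.finite _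
  have hQfty : Fintype ((Fin n → F) ⧸ V) := Fintype.ofFinite _
  have hfinQ : finrank F ((Fin n → F) ⧸ V) = 1 := by
    have := Submodule.finrank_quotient_add_finrank V
    rw [hfinE, hV] at this
    omega
  have hcardQ : Fintype.card ((Fin n → F) ⧸ V) ≤ Fintype.card F := by
    have : Fintype.card ((Fin n → F) ⧸ V) = Fintype.card F ^ finrank F ((Fin n → F) ⧸ V) :=
      card_eq_pow_finrank
    rw [this, hfinQ, pow_one]
  -- choose v avoiding all coset directions
  obtain ⟨v, hvV, hv⟩ := exists_avoid V (by omega)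
    hcardQ (fun c : (Fin n → F) ⧸ V => D (Quotient.out c))
    (fun c => hDlt _)
  have hDq : ∀ y : Fin n → F, D y = D (Quotient.out (Submodule.Quotient.mk y : (Fin n → F) ⧸ V)) := by
    intro y
    have hmk : (Submodule.Quotient.mk (Quotient.out (Submodule.Quotient.mk y
        : (Fin n → F) ⧸ V)) : (Fin n → F) ⧸ V) = Submodule.Quotient.mk y := by
      exact Quotient.out_eq _
    have hmem : Quotient.out (Submodule.Quotient.mk y : (Fin n → F) ⧸ V) - y ∈ V :=
      (Submodule.Quotient.eq V).mp hmk
    rw [hD]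
    simp only [hA]
    rw [vadd_coset_eq V hmem]
  have hv' : ∀ y, v ∉ D y := fun y => by rw [hDq y]; exact hv _
  have hv0 : v ≠ 0 := by
    rintro rfl
    exact hv' 0 (AffineSubspace.direction (A 0)).zero_mem
  -- build a (k+1)-dimensional subspace of V containing v
  have hspan1 : finrank F (F ∙ v) = 1 := finrank_span_singleton hv0
  have hsv : (F ∙ v) ≤ V := (span_le).mpr (by simpa using hvV)
  obtain ⟨T, hST, hTV, hTr⟩ := exists_intermediate k (F ∙ v) V hsv (by rw [hspan1, hV]; omega)
  obtain ⟨y, hy⟩ := hall T hTV (by rw [hTr, hspan1]; omega)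
  -- derive the contradiction
  have hsub : U ∩ (y +ᵥ (T : Set (Fin n → F))) ⊆ U ∩ (y +ᵥ (V : Set (Fin n → F))) := by
    refine Set.inter_subset_inter_right _ ?_
    rintro a ⟨b, hb, rfl⟩
    exact ⟨b, hTV hb, rfl⟩
  have h2 : affineSpan F (U ∩ (y +ᵥ (T : Set (Fin n → F)))) ≤ A y := affineSpan_mono F hsub
  have h3 : (AffineSubspace.mk' y (T : Submodule F (Fin n → F)) : Set (Fin n → F))
      ⊆ (A y : Set (Fin n → F)) := by
    rw [coe_mk'_eq]
    exact hy.trans h2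
  have h4 : AffineSubspace.mk' y (T : Submodule F (Fin n → F)) ≤ A y := h3
  have h5 : T ≤ D y := by
    have := AffineSubspace.direction_le h4
    rwa [AffineSubspace.direction_mk'] at this
  exact hv' y (h5 (hST (mem_span_singleton_self v)))
end

section
/- Let F be a finite field with q elements and let U ⊆ F³ with |U| = q². Let S₁ ≠ S₂ be two 2-dimensional F-linear subspaces of F³ whose corresponding lines at infinity are both undetermined by U, and let M = S₁ ∩ S₂ (a 1-dimensional subspace). Let f and g be affine lines whose point sets are contained in U, such that the direction of f is contained in S₁ and the direction of g is contained in S₂. Then either f and g have a common point, or the directions of f and g are both equal to M. -/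
open Pointwise

open Module in
/-- If `S` is undetermined by `U` and `U` contains the line `p +ᵥ D` with `D ≤ S`, then
`U` meets the coset `p +ᵥ S` only in that line. -/
lemma stmt9_key {F V : Type*} [Field F] [AddCommGroup V] [Module F V]
    [FiniteDimensional F V]
    (U : Set V) (S : Submodule F V) (hS : finrank F S = 2)
    (hnd : ¬ IsDeterminedBy U S) (p : V) (D : Submodule F V)
    (hD : finrank F D = 1) (hDS : D ≤ S)
    (hf : p +ᵥ (D : Set V) ⊆ U) :
    U ∩ (p +ᵥ (S : Set V)) ⊆ p +ᵥ (D : Set V) := by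
  set A := affineSpan F (U ∩ (p +ᵥ (S : Set V))) with hA
  have hpU : p ∈ U := hf ⟨0, D.zero_mem, by simp⟩
  have hpS : p ∈ p +ᵥ (S : Set V) := ⟨0, S.zero_mem, by simp⟩
  have hpA : p ∈ A := subset_affineSpan _ _ ⟨hpU, hpS⟩
  have hdirS : A.direction ≤ S := by
    rw [hA, direction_affineSpan, vectorSpan_def]
    rw [Submodule.span_le]
    rintro v ⟨a, ⟨-, sa, hsa, ha⟩, b, ⟨-, sb, hsb, hb⟩, rfl⟩
    have : a -ᵥ b = sa - sb := by
      simp only [← ha, ← hb, vadd_eq_add, vsub_eq_sub]; abel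
    show a -ᵥ b ∈ S; rw [this]; exact S.sub_mem hsa hsb
  have hDA : D ≤ A.direction := by
    intro d hd
    have hm : p + d ∈ U ∩ (p +ᵥ (S : Set V)) :=
      ⟨hf ⟨d, hd, rfl⟩, ⟨d, hDS hd, rfl⟩⟩
    have : (p + d) -ᵥ p ∈ A.direction :=
      AffineSubspace.vsub_mem_direction (subset_affineSpan _ _ hm) hpA
    simpa using this
  have hne2 : finrank F A.direction ≠ 2 := by
    intro h2
    have hAS : A.direction = S :=
      Submodule.eq_of_le_of_finrank_eq hdirS (by rw [h2, hS])
    apply hnd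
    refine ⟨p, fun y hy => ?_⟩
    obtain ⟨s, hs, rfl⟩ := hy
    have : s ∈ A.direction := hAS ▸ hs
    have := AffineSubspace.vadd_mem_of_mem_direction this hpA
    simpa [add_comm] using this
  have hle : finrank F A.direction ≤ 2 := hS ▸ Submodule.finrank_mono hdirS
  have hge : 1 ≤ finrank F A.direction := hD ▸ Submodule.finrank_mono hDA
  have heq : D = A.direction := by
    apply Submodule.eq_of_le_of_finrank_eq hDA
    omega
  rintro u ⟨huU, huS⟩
  have huA : u ∈ A := subset_affineSpan _ _ ⟨huU, huS⟩
  have : u -ᵥ p ∈ A.direction := AffineSubspace.vsub_mem_direction huA hpA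
  rw [← heq] at this
  exact ⟨u - p, this, by simp⟩

open Module in
/-- A line inside `U` whose direction is not in the undetermined plane direction `S`
meets every line inside `U` with direction in `S`. -/
lemma stmt9_meet {F : Type*} [Field F]
    (U : Set (Fin 3 → F)) (S : Submodule F (Fin 3 → F)) (hS : finrank F S = 2)
    (hnd : ¬ IsDeterminedBy U S) (p₁ p₂ : Fin 3 → F)
    (D₁ D₂ : Submodule F (Fin 3 → F))
    (hD₁ : finrank F D₁ = 1) (hD₁S : D₁ ≤ S) (hD₂S : ¬ D₂ ≤ S)
    (h₁ : p₁ +ᵥ (D₁ : Set (Fin 3 → F)) ⊆ U)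
    (h₂ : p₂ +ᵥ (D₂ : Set (Fin 3 → F)) ⊆ U) :
    ((p₁ +ᵥ (D₁ : Set (Fin 3 → F))) ∩ (p₂ +ᵥ (D₂ : Set (Fin 3 → F)))).Nonempty := by
  have htop : D₂ ⊔ S = ⊤ := by
    have hlt : S < D₂ ⊔ S := lt_of_le_of_ne le_sup_right (by
      intro h
      exact hD₂S (h ▸ le_sup_left))
    have h1 : 2 < finrank F (D₂ ⊔ S : Submodule F (Fin 3 → F)) :=
      hS ▸ Submodule.finrank_lt_finrank_of_lt hlt
    have h2 : finrank F (D₂ ⊔ S : Submodule F (Fin 3 → F)) ≤ 3 := by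
      have := Submodule.finrank_le (D₂ ⊔ S : Submodule F (Fin 3 → F))
      simpa [Module.finrank_fin_fun] using this
    apply Submodule.eq_top_of_finrank_eq
    simp only [Module.finrank_fin_fun]
    omega
  have hmem : p₁ - p₂ ∈ D₂ ⊔ S := htop ▸ Submodule.mem_top
  obtain ⟨d, hd, s, hs, hds⟩ := Submodule.mem_sup.mp hmem
  have hy₂ : p₂ + d ∈ p₂ +ᵥ (D₂ : Set (Fin 3 → F)) := ⟨d, hd, rfl⟩
  have h' : p₂ + d = p₁ - s := by
    rw [eq_sub_iff_add_eq, add_assoc, hds]; abel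
  have hyS : p₂ + d ∈ p₁ +ᵥ (S : Set (Fin 3 → F)) := by
    refine ⟨-s, S.neg_mem hs, ?_⟩
    show p₁ + (-s) = p₂ + d
    rw [h']; abel
  have hyU : p₂ + d ∈ U := h₂ hy₂
  have hy₁ : p₂ + d ∈ p₁ +ᵥ (D₁ : Set (Fin 3 → F)) :=
    stmt9_key U S hS hnd p₁ D₁ hD₁ hD₁S h₁ ⟨hyU, hyS⟩
  exact ⟨p₂ + d, hy₁, hy₂⟩

/-- Lemma 2 in the paper: with two undetermined lines at infinity
corresponding to `S₁ ≠ S₂` meeting at `M = S₁ ∩ S₂`, two affine lines `f ⊆ U`, `g ⊆ U`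
with directions in `S₁` resp. `S₂` either meet, or both have direction `M`. -/
theorem stmt_9 {F : Type*} [Field F] [Fintype F] {q : ℕ}
    (hq : Fintype.card F = q)
    (U : Set (Fin 3 → F)) (hU : U.ncard = q ^ 2)
    (S₁ S₂ : Submodule F (Fin 3 → F)) (hne : S₁ ≠ S₂)
    (hS₁ : Module.finrank F S₁ = 2) (hS₂ : Module.finrank F S₂ = 2)
    (hnd₁ : ¬ IsDeterminedBy U S₁) (hnd₂ : ¬ IsDeterminedBy U S₂)
    (M : Submodule F (Fin 3 → F)) (hM : M = S₁ ⊓ S₂)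
    (pf pg : Fin 3 → F) (Df Dg : Submodule F (Fin 3 → F))
    (hDf : Module.finrank F Df = 1) (hDg : Module.finrank F Dg = 1)
    (hDfS : Df ≤ S₁) (hDgS : Dg ≤ S₂)
    (hf : pf +ᵥ (Df : Set (Fin 3 → F)) ⊆ U)
    (hg : pg +ᵥ (Dg : Set (Fin 3 → F)) ⊆ U) :
    ((pf +ᵥ (Df : Set (Fin 3 → F))) ∩ (pg +ᵥ (Dg : Set (Fin 3 → F)))).Nonempty ∨
      (Df = M ∧ Dg = M) := by
  have hMeq : ∀ D : Submodule F (Fin 3 → F), Module.finrank F D = 1 → D ≤ S₁ → D ≤ S₂ →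
      D = M := by
    intro D hD h1 h2
    have hle : D ≤ M := hM ▸ le_inf h1 h2
    have hMS : M < S₁ := by
      rw [hM]
      refine lt_of_le_of_ne inf_le_left ?_
      intro h
      apply hne
      have hle' : S₁ ≤ S₂ := by rw [← h]; exact inf_le_right
      exact Submodule.eq_of_le_of_finrank_eq hle' (by rw [hS₁, hS₂])
    have h2' : Module.finrank F M < 2 := hS₁ ▸ Submodule.finrank_lt_finrank_of_lt hMS
    have h1' : 1 ≤ Module.finrank F M := hD ▸ Submodule.finrank_mono hle
    exact Submodule.eq_of_le_of_finrank_eq hle (by omega)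
  by_cases hg1 : Dg ≤ S₁
  · by_cases hf2 : Df ≤ S₂
    · exact Or.inr ⟨hMeq Df hDf hDfS hf2, hMeq Dg hDg hg1 hDgS⟩
    · left
      have := stmt9_meet U S₂ hS₂ hnd₂ pg pf Dg Df hDg hDgS hf2 hg hf
      obtain ⟨y, hy₁, hy₂⟩ := this
      exact ⟨y, hy₂, hy₁⟩
  · left
    exact stmt9_meet U S₁ hS₁ hnd₁ pf pg Df Dg hDf hDfS hg1 hf hg
end

section
/- Let F be a finite field with q elements and let U ⊆ F³ with |U| = q². Let S₁ ≠ S₂ be two 2-dimensional F-linear subspaces of F³ whose corresponding lines at infinity are both undetermined by U, and let M = S₁ ∩ S₂ (a 1-dimensional subspace). If there exists an affine line f contained in U whose direction is M, then every affine line g contained in U whose direction is contained in S₁ has direction M. -/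
open Pointwise

section Aux

variable {F : Type*} [Field F] [Fintype F]

local notation "V" => Fin 3 → F

lemma aux_mem_coset {z x : V} {S : Submodule F (Fin 3 → F)} :
    z ∈ x +ᵥ (S : Set V) ↔ z - x ∈ S := by
  rw [Set.mem_vadd_set_iff_neg_vadd_mem, vadd_eq_add, neg_add_eq_sub]
  exact Iff.rfl

lemma aux_ncard_coset (x : V) (S : Submodule F (Fin 3 → F)) :
    (x +ᵥ (S : Set V)).ncard = Fintype.card F ^ Module.finrank F S := by
  classical
  haveI : Fintype S := Fintype.ofFinite _
  rw [← Set.image_vadd, Set.ncard_image_of_injective _ (fun a b h => by simpa using h),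
    ← Nat.card_coe_set_eq]
  have h2 : Nat.card ↥(S : Set V) = Nat.card S := rfl
  rw [h2, Nat.card_eq_fintype_card]
  exact Module.card_eq_pow_finrank

lemma aux_ncard_inter_le (U : Set V) (S : Submodule F (Fin 3 → F))
    (hS : Module.finrank F S = 2) (hnd : ¬ IsDeterminedBy U S) (x : V) :
    (U ∩ (x +ᵥ (S : Set V))).ncard ≤ Fintype.card F := by
  set T : Set V := U ∩ (x +ᵥ (S : Set V)) with hT
  rcases T.eq_empty_or_nonempty with hE | ⟨a, haT⟩
  · rw [hE]; simpa using Fintype.card_pos.le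
  have haC : a - x ∈ S := aux_mem_coset.1 haT.2
  set W : Submodule F (Fin 3 → F) := Submodule.span F ((fun t => t - a) '' T) with hW
  have hWS : W ≤ S := by
    rw [hW, Submodule.span_le]
    rintro _ ⟨t, htT, rfl⟩
    show t - a ∈ S
    have h1 : t - x ∈ S := aux_mem_coset.1 htT.2
    have : t - a = (t - x) - (a - x) := by ring
    rw [this]; exact S.sub_mem h1 haC
  have hWne : W ≠ S := by
    intro hWeq
    apply hnd
    refine ⟨x, fun z hz => ?_⟩
    have hza : z - a ∈ W := by
      rw [hWeq]
      have h1 : z - x ∈ S := aux_mem_coset.1 hz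
      have : z - a = (z - x) - (a - x) := by ring
      rw [this]; exact S.sub_mem h1 haC
    have hWdir : W ≤ (affineSpan F T).direction := by
      rw [hW, Submodule.span_le]
      rintro _ ⟨t, htT, rfl⟩
      show t - a ∈ (affineSpan F T).direction
      rw [direction_affineSpan]
      exact vsub_mem_vectorSpan F htT haT
    have haS : a ∈ affineSpan F T := mem_affineSpan F haT
    have := AffineSubspace.vadd_mem_of_mem_direction (hWdir hza) haS
    simpa [vadd_eq_add, sub_add_cancel] using this
  have hWlt : W < S := lt_of_le_of_ne hWS hWne
  have hfr : Module.finrank F W < 2 := by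
    rw [← hS]; exact Submodule.finrank_lt_finrank_of_lt hWlt
  have hTaW : T ⊆ a +ᵥ (W : Set V) := by
    intro t htT
    rw [aux_mem_coset]
    exact Submodule.subset_span ⟨t, htT, rfl⟩
  calc T.ncard ≤ (a +ᵥ (W : Set V)).ncard := Set.ncard_le_ncard hTaW (Set.toFinite _)
    _ = Fintype.card F ^ Module.finrank F W := aux_ncard_coset a W
    _ ≤ Fintype.card F ^ 1 := Nat.pow_le_pow_right Fintype.card_pos (by omega)
    _ = Fintype.card F := pow_one _

lemma aux_ncard_inter_eq (U : Set V) (hU : U.ncard = Fintype.card F ^ 2)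
    (S : Submodule F (Fin 3 → F)) (hS : Module.finrank F S = 2)
    (hnd : ¬ IsDeterminedBy U S) (x : V) :
    (U ∩ (x +ᵥ (S : Set V))).ncard = Fintype.card F := by
  classical
  set q := Fintype.card F with hq
  set Q := (Fin 3 → F) ⧸ S with hQ
  haveI : Fintype Q := Fintype.ofFinite Q
  set mk : V → Q := Submodule.Quotient.mk with hmk
  have hfiber : ∀ y : V, mk ⁻¹' {mk y} = y +ᵥ (S : Set V) := by
    intro y
    ext z
    rw [Set.mem_preimage, Set.mem_singleton_iff, aux_mem_coset]
    exact Submodule.Quotient.eq S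
  have hle : ∀ c : Q, (U ∩ mk ⁻¹' {c}).ncard ≤ q := by
    intro c
    obtain ⟨y, rfl⟩ := Submodule.Quotient.mk_surjective S c
    rw [hfiber y]; exact aux_ncard_inter_le U S hS hnd _
  have hcardQ : Fintype.card Q = q := by
    have h1 : Module.finrank F Q + Module.finrank F S = Module.finrank F (Fin 3 → F) :=
      S.finrank_quotient_add_finrank
    rw [Module.finrank_fin_fun F, hS] at h1
    have h2 : Module.finrank F Q = 1 := by omega
    rw [show Fintype.card Q = q ^ Module.finrank F Q from Module.card_eq_pow_finrank, h2, pow_one]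
  have hncard_eq : ∀ c : Q, (U ∩ mk ⁻¹' {c}).ncard =
      (U.toFinset.filter (fun z => mk z = c)).card := by
    intro c
    rw [← Set.ncard_coe_finset]
    congr 1
    ext z
    simp [Set.mem_toFinset, Finset.mem_filter, Set.mem_preimage]
  have hsum : ∑ c : Q, (U ∩ mk ⁻¹' {c}).ncard = q ^ 2 := by
    rw [← hU, Set.ncard_eq_toFinset_card']
    rw [Finset.card_eq_sum_card_fiberwise (f := mk) (t := Finset.univ)
      (fun z _ => Finset.mem_univ _)]
    exact Finset.sum_congr rfl fun c _ => hncard_eq c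
  -- each fiber has exactly q points
  have hall : ∀ c : Q, (U ∩ mk ⁻¹' {c}).ncard = q := by
    by_contra hcon
    push_neg at hcon
    obtain ⟨c₀, hc₀⟩ := hcon
    have hlt : (U ∩ mk ⁻¹' {c₀}).ncard < q := lt_of_le_of_ne (hle c₀) hc₀
    have : ∑ c : Q, (U ∩ mk ⁻¹' {c}).ncard < ∑ _c : Q, q :=
      Finset.sum_lt_sum (fun c _ => hle c) ⟨c₀, Finset.mem_univ _, hlt⟩
    rw [hsum, Finset.sum_const, Finset.card_univ, hcardQ, smul_eq_mul, ← sq] at this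
    omega
  rw [← hfiber x]
  exact hall (mk x)


lemma aux_line_eq_inter (U : Set V) (q : ℕ) (hq : Fintype.card F = q)
    (S : Submodule F (Fin 3 → F))
    (hcount : ∀ x : V, (U ∩ (x +ᵥ (S : Set V))).ncard = q)
    (D : Submodule F (Fin 3 → F)) (hD : Module.finrank F D = 1) (hDS : D ≤ S)
    (p : V) (hline : p +ᵥ (D : Set V) ⊆ U) :
    p +ᵥ (D : Set V) = U ∩ (p +ᵥ (S : Set V)) := by
  have hsub : p +ᵥ (D : Set V) ⊆ U ∩ (p +ᵥ (S : Set V)) := by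
    intro z hz
    exact ⟨hline hz, aux_mem_coset.2 (hDS (aux_mem_coset.1 hz))⟩
  refine Set.eq_of_subset_of_ncard_le hsub ?_ (Set.toFinite _)
  rw [hcount p, aux_ncard_coset p D, hD, pow_one, hq]

end Aux


/-- Lemma 3 in the paper: with two undetermined lines at infinity
corresponding to `S₁ ≠ S₂` meeting at `M = S₁ ∩ S₂`, if some affine line contained in `U`
has direction `M`, then every affine line contained in `U` with direction in `S₁` has
direction `M`. -/
theorem stmt_10 {F : Type*} [Field F] [Fintype F] {q : ℕ}
    (hq : Fintype.card F = q)
    (U : Set (Fin 3 → F)) (hU : U.ncard = q ^ 2)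
    (S₁ S₂ : Submodule F (Fin 3 → F)) (hne : S₁ ≠ S₂)
    (hS₁ : Module.finrank F S₁ = 2) (hS₂ : Module.finrank F S₂ = 2)
    (hnd₁ : ¬ IsDeterminedBy U S₁) (hnd₂ : ¬ IsDeterminedBy U S₂)
    (M : Submodule F (Fin 3 → F)) (hM : M = S₁ ⊓ S₂)
    (hf : ∃ pf : Fin 3 → F, pf +ᵥ (M : Set (Fin 3 → F)) ⊆ U) :
    ∀ (pg : Fin 3 → F) (Dg : Submodule F (Fin 3 → F)),
      Module.finrank F Dg = 1 → Dg ≤ S₁ →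
      pg +ᵥ (Dg : Set (Fin 3 → F)) ⊆ U → Dg = M := by
  intro pg Dg hDg1 hDgS₁ hg
  obtain ⟨pf, hfU⟩ := hf
  subst hq
  set q := Fintype.card F with hq
  have hV3 : Module.finrank F (Fin 3 → F) = 3 := Module.finrank_fin_fun F
  -- finrank of sup and M
  have hsup3 : Module.finrank F ↥(S₁ ⊔ S₂) = 3 := by
    have hlt : S₁ < S₁ ⊔ S₂ := by
      refine lt_of_le_of_ne le_sup_left fun h => ?_
      exact hne (Submodule.eq_of_le_of_finrank_eq (h ▸ le_sup_right) (by rw [hS₂, hS₁])).symm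
    have h1 : Module.finrank F S₁ < Module.finrank F ↥(S₁ ⊔ S₂) :=
      Submodule.finrank_lt_finrank_of_lt hlt
    have h2 : Module.finrank F ↥(S₁ ⊔ S₂) ≤ 3 := by
      exact (Submodule.finrank_le _).trans hV3.le
    omega
  have hM1 : Module.finrank F M = 1 := by
    have := Submodule.finrank_sup_add_finrank_inf_eq S₁ S₂
    rw [hsup3, hS₁, hS₂, ← hM] at this
    omega
  have hMS₁ : M ≤ S₁ := hM ▸ inf_le_left
  have hMS₂ : M ≤ S₂ := hM ▸ inf_le_right
  -- counting lemmas
  have hcount₁ := aux_ncard_inter_eq U hU S₁ hS₁ hnd₁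
  have hcount₂ := aux_ncard_inter_eq U hU S₂ hS₂ hnd₂
  have hf2 : pf +ᵥ (M : Set (Fin 3 → F)) = U ∩ (pf +ᵥ (S₂ : Set (Fin 3 → F))) :=
    aux_line_eq_inter U q rfl S₂ hcount₂ M hM1 hMS₂ pf hfU
  have hg1 : pg +ᵥ (Dg : Set (Fin 3 → F)) = U ∩ (pg +ᵥ (S₁ : Set (Fin 3 → F))) :=
    aux_line_eq_inter U q rfl S₁ hcount₁ Dg hDg1 hDgS₁ pg hg
  by_contra hDgM
  -- Dg ⊓ S₂ = ⊥
  have hinf_bot : Dg ⊓ S₂ = ⊥ := by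
    by_contra hb
    obtain ⟨v, hv, hv0⟩ := (Submodule.ne_bot_iff _).1 hb
    have hsp : (F ∙ v) ≤ Dg := (Submodule.span_singleton_le_iff_mem v Dg).2 hv.1
    have hspan : (F ∙ v) = Dg :=
      Submodule.eq_of_le_of_finrank_eq hsp (by rw [finrank_span_singleton hv0, hDg1])
    have hDgS₂ : Dg ≤ S₂ := hspan ▸ (Submodule.span_singleton_le_iff_mem v S₂).2 hv.2
    exact hDgM (Submodule.eq_of_le_of_finrank_eq
      (le_inf hDgS₁ hDgS₂ |>.trans_eq hM.symm) (by rw [hDg1, hM1]))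
  have hsup_top : Dg ⊔ S₂ = ⊤ := by
    apply Submodule.eq_top_of_finrank_eq
    have := Submodule.finrank_sup_add_finrank_inf_eq Dg S₂
    rw [hinf_bot, hDg1, hS₂] at this
    simp only [finrank_bot] at this
    omega
  -- get the intersection point p of g with the S₂-coset of f
  have hmem : pf - pg ∈ Dg ⊔ S₂ := hsup_top ▸ Submodule.mem_top
  obtain ⟨d, hd, s, hs, hds⟩ := Submodule.mem_sup.1 hmem
  set p : Fin 3 → F := pg + d with hp
  have hpg : p ∈ pg +ᵥ (Dg : Set (Fin 3 → F)) := aux_mem_coset.2 (by simpa [hp] using hd)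
  have hpU : p ∈ U := hg hpg
  have hpC₂ : p ∈ pf +ᵥ (S₂ : Set (Fin 3 → F)) := by
    rw [aux_mem_coset]
    have h : p - pf = -s := by rw [hp]; linear_combination hds
    rw [h]; exact S₂.neg_mem hs
  have hpf : p ∈ pf +ᵥ (M : Set (Fin 3 → F)) := by rw [hf2]; exact ⟨hpU, hpC₂⟩
  have hpfM : p - pf ∈ M := aux_mem_coset.1 hpf
  -- pf - pg ∈ S₁, so the S₁-cosets of f and g coincide
  have hpgS₁ : p - pg ∈ S₁ := hDgS₁ (by simpa [hp] using hd)
  have hfgS₁ : pf - pg ∈ S₁ := by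
    have : pf - pg = (p - pg) - (p - pf) := by ring
    rw [this]; exact S₁.sub_mem hpgS₁ (hMS₁ hpfM)
  have hcoset : pg +ᵥ (S₁ : Set (Fin 3 → F)) = pf +ᵥ (S₁ : Set (Fin 3 → F)) := by
    ext z
    rw [aux_mem_coset, aux_mem_coset]
    constructor
    · intro h
      have : z - pf = (z - pg) - (pf - pg) := by ring
      rw [this]; exact S₁.sub_mem h hfgS₁
    · intro h
      have : z - pg = (z - pf) + (pf - pg) := by ring
      rw [this]; exact S₁.add_mem h hfgS₁
  have hf1 : pf +ᵥ (M : Set (Fin 3 → F)) = U ∩ (pf +ᵥ (S₁ : Set (Fin 3 → F))) :=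
    aux_line_eq_inter U q rfl S₁ hcount₁ M hM1 hMS₁ pf hfU
  have hfg : pg +ᵥ (Dg : Set (Fin 3 → F)) = pf +ᵥ (M : Set (Fin 3 → F)) := by
    rw [hg1, hcoset, ← hf1]
  -- conclude M ≤ Dg hence Dg = M
  have hpfDg : pf - pg ∈ Dg := by
    have : pf ∈ pg +ᵥ (Dg : Set (Fin 3 → F)) := by
      rw [hfg, aux_mem_coset]; simpa using M.zero_mem
    exact aux_mem_coset.1 this
  have hMDg : M ≤ Dg := by
    intro m hm
    have h1 : pf + m ∈ pf +ᵥ (M : Set (Fin 3 → F)) := aux_mem_coset.2 (by simpa using hm)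
    rw [← hfg] at h1
    have h2 : pf + m - pg ∈ Dg := aux_mem_coset.1 h1
    have : m = (pf + m - pg) - (pf - pg) := by ring
    rw [this]; exact Dg.sub_mem h2 hpfDg
  exact hDgM (Submodule.eq_of_le_of_finrank_eq hMDg (by rw [hM1, hDg1])).symm
end

section
/- Let F be a finite field with q elements and let U ⊆ F³ with |U| = q²; assume U is not contained in any affine plane of F³. Let S₁ ≠ S₂ be two 2-dimensional F-linear subspaces of F³ whose corresponding lines at infinity are both undetermined by U, and let M = S₁ ∩ S₂ (a 1-dimensional subspace). If f and g are two distinct parallel affine lines contained in U whose directions are contained in S₁, then their common direction is M. -/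
open Pointwise

/-- Lemma 4 in the paper: assume `U` is not contained in any affine plane.
With two undetermined lines at infinity corresponding to `S₁ ≠ S₂` meeting at
`M = S₁ ∩ S₂`, two distinct parallel affine lines contained in `U` with direction in `S₁`
must have direction `M`. -/
theorem stmt_11 {F : Type*} [Field F] [Fintype F] {q : ℕ}
    (hq : Fintype.card F = q)
    (U : Set (Fin 3 → F)) (hU : U.ncard = q ^ 2)
    (hplane : ¬ ∃ (x : Fin 3 → F) (P : Submodule F (Fin 3 → F)),
      Module.finrank F P = 2 ∧ U ⊆ x +ᵥ (P : Set (Fin 3 → F)))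
    (S₁ S₂ : Submodule F (Fin 3 → F)) (hne : S₁ ≠ S₂)
    (hS₁ : Module.finrank F S₁ = 2) (hS₂ : Module.finrank F S₂ = 2)
    (hnd₁ : ¬ IsDeterminedBy U S₁) (hnd₂ : ¬ IsDeterminedBy U S₂)
    (M : Submodule F (Fin 3 → F)) (hM : M = S₁ ⊓ S₂)
    (pf pg : Fin 3 → F) (D : Submodule F (Fin 3 → F))
    (hD : Module.finrank F D = 1) (hDS : D ≤ S₁)
    (hf : pf +ᵥ (D : Set (Fin 3 → F)) ⊆ U)
    (hg : pg +ᵥ (D : Set (Fin 3 → F)) ⊆ U)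
    (hfg : pf +ᵥ (D : Set (Fin 3 → F)) ≠ pg +ᵥ (D : Set (Fin 3 → F))) :
    D = M := by
  classical
  by_cases hDS₂ : D ≤ S₂
  · -- easy case : D ≤ S₁ ⊓ S₂ = M, and dimensions force equality
    have hDM : D ≤ M := hM ▸ le_inf hDS hDS₂
    have hMS₁ : M ≤ S₁ := hM ▸ inf_le_left
    have hMne : M ≠ S₁ := by
      intro h
      apply hne
      have hle : S₁ ≤ S₂ := by rw [← h, hM]; exact inf_le_right
      exact Submodule.eq_of_le_of_finrank_le hle (by rw [hS₁, hS₂])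
    have h1 : Module.finrank F M < 2 := by
      rw [← hS₁]
      exact Submodule.finrank_lt_finrank_of_lt (lt_of_le_of_ne hMS₁ hMne)
    have h2 : 1 ≤ Module.finrank F M := hD ▸ Submodule.finrank_mono hDM
    exact Submodule.eq_of_le_of_finrank_eq hDM (by omega)
  · -- hard case: D ⊄ S₂ leads to a contradiction with hplane
    exfalso
    obtain ⟨d, hdD, hdS₂⟩ := SetLike.not_le_iff_exists.mp hDS₂
    have hd0 : d ≠ 0 := fun h => hdS₂ (h ▸ S₂.zero_mem)
    -- D is spanned by d
    have hDspan : Submodule.span F {d} = D := by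
      apply Submodule.eq_of_le_of_finrank_eq
      · rwa [Submodule.span_singleton_le_iff_mem]
      · rw [finrank_span_singleton hd0, hD]
    -- D ⊔ S₂ = ⊤
    have hDinf : D ⊓ S₂ = ⊥ := by
      by_contra h
      have hlt : D ⊓ S₂ < D := lt_of_le_of_ne inf_le_left (by
        intro he
        exact hDS₂ (he ▸ inf_le_right))
      have h1 : Module.finrank F (D ⊓ S₂ : Submodule F (Fin 3 → F)) < 1 :=
        hD ▸ Submodule.finrank_lt_finrank_of_lt hlt
      have h2 : D ⊓ S₂ = ⊥ := by
        rw [← Submodule.finrank_eq_zero]; omega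
      exact h h2
    have hsup : D ⊔ S₂ = ⊤ := by
      apply Submodule.eq_top_of_finrank_eq
      have := Submodule.finrank_sup_add_finrank_inf_eq D S₂
      rw [hDinf] at this
      simp only [finrank_bot] at this
      have h3 : Module.finrank F (Fin 3 → F) = 3 := by
        simp [Module.finrank_fintype_fun_eq_card]
      have h4 : Module.finrank F (D ⊔ S₂ : Submodule F (Fin 3 → F))
          ≤ Module.finrank F (Fin 3 → F) := Submodule.finrank_le _
      omega
    -- decompose pg - pf
    have hvmem : pg - pf ∈ D ⊔ S₂ := hsup ▸ Submodule.mem_top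
    obtain ⟨y, hy, s, hs, hys⟩ := Submodule.mem_sup.mp hvmem
    obtain ⟨α, rfl⟩ := Submodule.mem_span_singleton.mp (hDspan ▸ hy : y ∈ Submodule.span F {d})
    set w : Fin 3 → F := s with hw
    -- w ≠ 0, else the two lines coincide
    have hw0 : w ≠ 0 := by
      intro h0
      apply hfg
      have hvD : pg - pf ∈ D := by
        rw [← hys, h0, add_zero]; exact hy
      ext z
      simp only [Set.mem_vadd_set]
      constructor
      · rintro ⟨m, hm, rfl⟩
        exact ⟨m - (pg - pf), D.sub_mem hm hvD, by simp [vadd_eq_add]; abel⟩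
      · rintro ⟨m, hm, rfl⟩
        exact ⟨m + (pg - pf), D.add_mem hm hvD, by simp [vadd_eq_add]; abel⟩
    -- every point of U lies in the plane pf + span {d, w}
    have hkey : U ⊆ pf +ᵥ (Submodule.span F {d, w} : Set (Fin 3 → F)) := by
      intro u hu
      have humem : u - pf ∈ D ⊔ S₂ := hsup ▸ Submodule.mem_top
      obtain ⟨y', hy', s', hs', hys'⟩ := Submodule.mem_sup.mp humem
      obtain ⟨t, rfl⟩ := Submodule.mem_span_singleton.mp
        (hDspan ▸ hy' : y' ∈ Submodule.span F {d})
      -- the two points of the lines f and g in the coset (pf + t•d) + S₂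
      set a : Fin 3 → F := pf + t • d with ha
      set b : Fin 3 → F := a + w with hb
      have haU : a ∈ U := hf ⟨t • d, Submodule.smul_mem _ _ hdD, by simp [ha, vadd_eq_add]⟩
      have hbU : b ∈ U := by
        apply hg
        refine ⟨(t - α) • d, Submodule.smul_mem _ _ hdD, ?_⟩
        have : w = pg - pf - α • d := by rw [hw, ← hys]; abel
        simp only [hb, ha, this, vadd_eq_add, sub_smul]
        abel
      have huc : u = a + s' := by rw [ha, add_assoc, hys']; abel
      -- the three points lie in U ∩ (a + S₂)
      have haC : a ∈ a +ᵥ (S₂ : Set (Fin 3 → F)) :=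
        ⟨0, S₂.zero_mem, by simp [vadd_eq_add]⟩
      have hbC : b ∈ a +ᵥ (S₂ : Set (Fin 3 → F)) :=
        ⟨w, hs, by simp [hb, vadd_eq_add, add_comm]⟩
      have huC : u ∈ a +ᵥ (S₂ : Set (Fin 3 → F)) :=
        ⟨s', hs', by simp [huc, vadd_eq_add, add_comm]⟩
      -- s' must be a multiple of w, otherwise S₂ would be determined
      have hs'w : s' ∈ Submodule.span F {w} := by
        by_contra hns
        apply hnd₂
        refine ⟨a, ?_⟩
        have hspanS₂ : Submodule.span F {w, s'} = S₂ := by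
          apply Submodule.eq_of_le_of_finrank_eq
          · rw [Submodule.span_le]
            rintro z (rfl | rfl)
            · exact hs
            · exact hs'
          · rw [hS₂]
            have hli : LinearIndependent F ![w, s'] := by
              rw [LinearIndependent.pair_iff' hw0]
              intro c hc
              exact hns (hc ▸ Submodule.smul_mem _ _ (Submodule.mem_span_singleton_self w))
            have := finrank_span_eq_card hli
            rw [show Set.range ![w, s'] = {w, s'} by
              ext z; simp [Fin.exists_fin_two]; tauto] at this
            rw [this]; rfl
        rintro p ⟨z, hz, rfl⟩
        rw [← hspanS₂] at hz
        obtain ⟨β, γ, hβγ⟩ := Submodule.mem_span_pair.mp hz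
        have haSp : a ∈ affineSpan F (U ∩ (a +ᵥ (S₂ : Set (Fin 3 → F)))) :=
          subset_affineSpan _ _ ⟨haU, haC⟩
        have hbSp : b ∈ affineSpan F (U ∩ (a +ᵥ (S₂ : Set (Fin 3 → F)))) :=
          subset_affineSpan _ _ ⟨hbU, hbC⟩
        have huSp : u ∈ affineSpan F (U ∩ (a +ᵥ (S₂ : Set (Fin 3 → F)))) :=
          subset_affineSpan _ _ ⟨hu, huC⟩
        have step1 : β • (b -ᵥ a) +ᵥ a ∈
            affineSpan F (U ∩ (a +ᵥ (S₂ : Set (Fin 3 → F)))) :=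
          AffineSubspace.smul_vsub_vadd_mem _ β hbSp haSp haSp
        have step2 : γ • (u -ᵥ a) +ᵥ (β • (b -ᵥ a) +ᵥ a) ∈
            affineSpan F (U ∩ (a +ᵥ (S₂ : Set (Fin 3 → F)))) :=
          AffineSubspace.smul_vsub_vadd_mem _ γ huSp haSp step1
        have heq : γ • (u -ᵥ a) +ᵥ (β • (b -ᵥ a) +ᵥ a) = a +ᵥ z := by
          have h1 : b -ᵥ a = w := by simp [hb, vsub_eq_sub]
          have h2 : u -ᵥ a = s' := by simp [huc, vsub_eq_sub]
          rw [h1, h2, ← hβγ]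
          simp only [vadd_eq_add]
          abel
        rwa [heq] at step2
      -- conclude u is in the plane
      obtain ⟨β, hβ⟩ := Submodule.mem_span_singleton.mp hs'w
      refine ⟨t • d + β • w, ?_, by
        simp only [vadd_eq_add]
        rw [← hβ] at hys'
        rw [hys']; abel⟩
      exact Submodule.add_mem _
        (Submodule.smul_mem _ _ (Submodule.subset_span (by simp)))
        (Submodule.smul_mem _ _ (Submodule.subset_span (by simp)))
    -- this contradicts hplane
    apply hplane
    refine ⟨pf, Submodule.span F {d, w}, ?_, hkey⟩
    have hli : LinearIndependent F ![d, w] := by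
      rw [LinearIndependent.pair_iff' hd0]
      intro c hc
      rcases eq_or_ne c 0 with rfl | hc0
      · rw [zero_smul] at hc; exact hw0 hc.symm
      · apply hdS₂
        have hdw : d = c⁻¹ • w := by
          rw [← hc, smul_smul, inv_mul_cancel₀ hc0, one_smul]
        rw [hdw]; exact Submodule.smul_mem _ _ hs
    have := finrank_span_eq_card hli
    rw [show Set.range ![d, w] = {d, w} by ext z; simp [Fin.exists_fin_two]; tauto] at this
    rw [this]; rfl
end

section
/- Let F be a finite field with q elements and let U ⊆ F³ with |U| = q²; assume U is not contained in any affine plane of F³. Let S₁ ≠ S₂ be two 2-dimensional F-linear subspaces of F³ whose corresponding lines at infinity are both undetermined by U, and let M = S₁ ∩ S₂ (a 1-dimensional subspace). If there exist two distinct parallel affine lines f, g contained in U whose directions are contained in S₁, then U + M = U, i.e. U consists of q parallel affine lines whose common direction is M. -/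
open Pointwise

set_option linter.unusedSectionVars false

namespace Stmt12Aux

open Module

variable {F : Type*} [Field F]

/-- The affine line through `p` with direction vector `v`. -/
def line (p v : Fin 3 → F) : Set (Fin 3 → F) := {y | ∃ t : F, y = t • v + p}

lemma mem_coset {S : Submodule F (Fin 3 → F)} {x y : Fin 3 → F} :
    y ∈ x +ᵥ (S : Set (Fin 3 → F)) ↔ y - x ∈ S := by
  rw [Set.mem_vadd_set]
  constructor
  · rintro ⟨s, hs, rfl⟩
    simpa using hs
  · intro h
    exact ⟨y - x, h, by simp⟩

lemma coset_eq {S : Submodule F (Fin 3 → F)} {x y : Fin 3 → F} (h : x - y ∈ S) :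
    x +ᵥ (S : Set (Fin 3 → F)) = y +ᵥ (S : Set (Fin 3 → F)) := by
  ext z
  rw [mem_coset, mem_coset]
  constructor
  · intro hz
    have h2 := S.add_mem hz h
    have e : z - x + (x - y) = z - y := by abel
    rwa [e] at h2
  · intro hz
    have h2 := S.sub_mem hz h
    have e : z - y - (x - y) = z - x := by abel
    rwa [e] at h2

variable [Fintype F] {q : ℕ}

lemma line_ncard (hq : Fintype.card F = q) {v : Fin 3 → F} (hv : v ≠ 0) (p : Fin 3 → F) :
    (line p v).ncard = q := by
  have hinj : Function.Injective (fun t : F => t • v + p) := by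
    intro a b hab
    have : a • v = b • v := by simpa using hab
    exact smul_left_injective F hv this
  have hrange : line p v = Set.range (fun t : F => t • v + p) := by
    ext y
    exact ⟨fun ⟨t, ht⟩ => ⟨t, ht.symm⟩, fun ⟨t, ht⟩ => ⟨t, ht.symm⟩⟩
  rw [hrange, ← Nat.card_coe_set_eq, Nat.card_range_of_injective hinj,
    Nat.card_eq_fintype_card, hq]

lemma ncard_le_of_collinear (hq : Fintype.card F = q) {A : Set (Fin 3 → F)}
    (hcol : Collinear F A) : A.ncard ≤ q := by
  rcases A.eq_empty_or_nonempty with rfl | ⟨p, hp⟩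
  · simp
  obtain ⟨v, hv⟩ := (collinear_iff_of_mem hp).1 hcol
  have hsub : A ⊆ Set.range (fun t : F => t • v + p) := by
    intro y hy
    obtain ⟨r, hr⟩ := hv y hy
    exact ⟨r, by simpa using hr.symm⟩
  calc A.ncard ≤ (Set.range (fun t : F => t • v + p)).ncard :=
        Set.ncard_le_ncard hsub (Set.toFinite _)
    _ = ((fun t : F => t • v + p) '' Set.univ).ncard := by rw [Set.image_univ]
    _ ≤ (Set.univ : Set F).ncard := Set.ncard_image_le (Set.toFinite _)
    _ = q := by rw [Set.ncard_univ, Nat.card_eq_fintype_card, hq]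

lemma collinear_inter {S : Submodule F (Fin 3 → F)} (hS : finrank F S = 2)
    {U : Set (Fin 3 → F)} (hnd : ¬ IsDeterminedBy U S) (x : Fin 3 → F) :
    Collinear F (U ∩ (x +ᵥ (S : Set (Fin 3 → F)))) := by
  by_contra hcol
  apply hnd
  refine ⟨x, ?_⟩
  set A := U ∩ (x +ᵥ (S : Set (Fin 3 → F))) with hA
  have hAne : A.Nonempty := by
    rcases A.eq_empty_or_nonempty with h | h
    · exact absurd (h ▸ collinear_empty F _ : Collinear F A) hcol
    · exact h
  obtain ⟨p, hp⟩ := hAne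
  have hsubW : A ⊆ (AffineSubspace.mk' x S : Set (Fin 3 → F)) := by
    intro y hy
    have : y - x ∈ S := mem_coset.1 hy.2
    exact AffineSubspace.mem_mk'.2 (by simpa using this)
  have hle : affineSpan F A ≤ AffineSubspace.mk' x S := affineSpan_le.2 hsubW
  have hdle : vectorSpan F A ≤ S := by
    have := AffineSubspace.direction_le hle
    rwa [direction_affineSpan, AffineSubspace.direction_mk'] at this
  have hfr2 : 2 ≤ finrank F (vectorSpan F A) := by
    by_contra hlt
    push_neg at hlt
    apply hcol
    rw [collinear_iff_rank_le_one]
    have h1 : finrank F (vectorSpan F A) ≤ 1 := by omega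
    rw [← Module.finrank_eq_rank]
    exact_mod_cast h1
  have hveq : vectorSpan F A = S :=
    Submodule.eq_of_le_of_finrank_le hdle (by rw [hS]; exact hfr2)
  have hspan_eq : affineSpan F A = AffineSubspace.mk' x S := by
    rw [AffineSubspace.eq_iff_direction_eq_of_mem ((subset_affineSpan F A) hp) (hsubW hp)]
    rw [direction_affineSpan, AffineSubspace.direction_mk', hveq]
  intro y hy
  have hy' : y ∈ AffineSubspace.mk' x S :=
    AffineSubspace.mem_mk'.2 (by simpa using mem_coset.1 hy)
  rw [← hspan_eq] at hy'
  exact hy'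

lemma ncard_inter_eq (hq : Fintype.card F = q) {U : Set (Fin 3 → F)} (hU : U.ncard = q ^ 2)
    {S : Submodule F (Fin 3 → F)} (hS : finrank F S = 2)
    (hnd : ¬ IsDeterminedBy U S) (x : Fin 3 → F) :
    (U ∩ (x +ᵥ (S : Set (Fin 3 → F)))).ncard = q := by
  classical
  letI : Fintype ((Fin 3 → F) ⧸ S) := Fintype.ofFinite _
  have hcardQ : Fintype.card ((Fin 3 → F) ⧸ S) = q := by
    have h3 : finrank F (Fin 3 → F) = 3 := by simp [finrank_pi]
    have h1 := Submodule.finrank_quotient_add_finrank S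
    rw [h3, hS] at h1
    have h2 : finrank F ((Fin 3 → F) ⧸ S) = 1 := by omega
    rw [card_eq_pow_finrank (K := F) (V := (Fin 3 → F) ⧸ S), h2, hq, pow_one]
  have hUfin : U.Finite := Set.toFinite U
  set s := hUfin.toFinset with hs
  have hcount : s.card = ∑ c : (Fin 3 → F) ⧸ S,
      (s.filter (fun y => Submodule.Quotient.mk y = c)).card :=
    Finset.card_eq_sum_card_fiberwise (fun y _ => Finset.mem_univ _)
  have hfib : ∀ z : Fin 3 → F,
      ((s.filter (fun y => (Submodule.Quotient.mk y : (Fin 3 → F) ⧸ S) = Submodule.Quotient.mk z)).card : ℕ)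
        = (U ∩ (z +ᵥ (S : Set (Fin 3 → F)))).ncard := by
    intro z
    rw [← Set.ncard_coe_finset]
    congr 1
    ext y
    simp only [hs, Finset.coe_filter, Set.mem_setOf_eq, Set.Finite.mem_toFinset, Set.mem_inter_iff,
      Submodule.Quotient.eq, mem_coset]
  have hle : ∀ c : (Fin 3 → F) ⧸ S,
      (s.filter (fun y => Submodule.Quotient.mk y = c)).card ≤ q := by
    intro c
    obtain ⟨z, rfl⟩ := Submodule.Quotient.mk_surjective S c
    rw [hfib z]
    exact ncard_le_of_collinear hq (collinear_inter hS hnd z)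
  have hsU : s.card = U.ncard := by rw [← Set.ncard_coe_finset, hUfin.coe_toFinset]
  have hsum : ∑ c : (Fin 3 → F) ⧸ S,
      (s.filter (fun y => Submodule.Quotient.mk y = c)).card
      = ∑ _c : (Fin 3 → F) ⧸ S, q := by
    rw [← hcount, hsU, hU, Finset.sum_const, Finset.card_univ, hcardQ, smul_eq_mul, sq]
  have := (Finset.sum_eq_sum_iff_of_le (fun i _ => hle i)).1 hsum
    (Submodule.Quotient.mk x) (Finset.mem_univ _)
  rw [← hfib x, this]

lemma key (hq : Fintype.card F = q) {U : Set (Fin 3 → F)} (hU : U.ncard = q ^ 2)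
    {S : Submodule F (Fin 3 → F)} (hS : finrank F S = 2)
    (hnd : ¬ IsDeterminedBy U S) (x : Fin 3 → F) :
    ∃ p v : Fin 3 → F, p ∈ U ∧ v ≠ 0 ∧ v ∈ S ∧
      U ∩ (x +ᵥ (S : Set (Fin 3 → F))) = line p v := by
  have hcard := ncard_inter_eq hq hU hS hnd x
  have hcol := collinear_inter hS hnd x
  set A := U ∩ (x +ᵥ (S : Set (Fin 3 → F))) with hA
  have hq2 : 2 ≤ q := by rw [← hq]; exact Fintype.one_lt_card
  have h1lt : 1 < A.ncard := by rw [hcard]; omega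
  obtain ⟨p₁, p₂, hp₁, hp₂, hne12⟩ := (Set.one_lt_ncard_iff (Set.toFinite A)).1 h1lt
  obtain ⟨v, hv⟩ := (collinear_iff_of_mem hp₁).1 hcol
  have hsub : A ⊆ line p₁ v := by
    intro y hy
    obtain ⟨r, hr⟩ := hv y hy
    exact ⟨r, by simpa using hr⟩
  have hvne : v ≠ 0 := by
    rintro rfl
    obtain ⟨r, hr⟩ := hv p₂ hp₂
    apply hne12.symm
    rw [hr]; simp
  have hAeq : A = line p₁ v :=
    Set.eq_of_subset_of_ncard_le hsub (by rw [line_ncard hq hvne, hcard]) (Set.toFinite _)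
  obtain ⟨r, hr⟩ := hv p₂ hp₂
  have hrne : r ≠ 0 := by
    rintro rfl
    apply hne12.symm
    rw [hr]; simp
  have hd : p₂ - p₁ ∈ S := by
    have e : p₂ - p₁ = (p₂ - x) - (p₁ - x) := by abel
    rw [e]
    exact S.sub_mem (mem_coset.1 hp₂.2) (mem_coset.1 hp₁.2)
  have hveq : v = r⁻¹ • (p₂ - p₁) := by
    have e : p₂ - p₁ = r • v := by rw [hr]; simp
    rw [e, smul_smul, inv_mul_cancel₀ hrne, one_smul]
  exact ⟨p₁, v, hp₁.1, hvne, by rw [hveq]; exact S.smul_mem _ hd, hAeq⟩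

lemma exists_cross {S : Submodule F (Fin 3 → F)} (hS : finrank F S = 2)
    {v : Fin 3 → F} (hv : v ∉ S) (p y : Fin 3 → F) :
    ∃ t : F, p + t • v ∈ y +ᵥ (S : Set (Fin 3 → F)) := by
  have h3 : finrank F (Fin 3 → F) = 3 := by simp [finrank_pi]
  have hQ1 : finrank F ((Fin 3 → F) ⧸ S) = 1 := by
    have h1 := Submodule.finrank_quotient_add_finrank S
    rw [h3, hS] at h1; omega
  have hmkv : (Submodule.Quotient.mk v : (Fin 3 → F) ⧸ S) ≠ 0 :=
    fun h => hv ((Submodule.Quotient.mk_eq_zero S).1 h)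
  have htop : Submodule.span F {(Submodule.Quotient.mk v : (Fin 3 → F) ⧸ S)} = ⊤ := by
    apply Submodule.eq_top_of_finrank_eq
    rw [finrank_span_singleton hmkv, hQ1]
  have hm : (Submodule.Quotient.mk (y - p) : (Fin 3 → F) ⧸ S)
      ∈ Submodule.span F {(Submodule.Quotient.mk v : (Fin 3 → F) ⧸ S)} := by
    rw [htop]; trivial
  obtain ⟨t, ht⟩ := Submodule.mem_span_singleton.1 hm
  refine ⟨t, mem_coset.2 ?_⟩
  have h0 : (Submodule.Quotient.mk (t • v - (y - p)) : (Fin 3 → F) ⧸ S) = 0 := by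
    rw [Submodule.Quotient.mk_sub, Submodule.Quotient.mk_smul, ht, sub_self]
  have hmem : t • v - (y - p) ∈ S := (Submodule.Quotient.mk_eq_zero S).1 h0
  have e : p + t • v - y = t • v - (y - p) := by abel
  rwa [e]

end Stmt12Aux

open Module Stmt12Aux in
/-- Corollary 5 in the paper: assume `U` is not contained in any affine
plane. With two undetermined lines at infinity corresponding to `S₁ ≠ S₂` meeting at
`M = S₁ ∩ S₂`, if `U` contains two distinct parallel affine lines with direction in `S₁`,
then `U` consists of parallel lines with common direction `M`, i.e. `U + M = U`. -/
theorem stmt_12 {F : Type*} [Field F] [Fintype F] {q : ℕ}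
    (hq : Fintype.card F = q)
    (U : Set (Fin 3 → F)) (hU : U.ncard = q ^ 2)
    (hplane : ¬ ∃ (x : Fin 3 → F) (P : Submodule F (Fin 3 → F)),
      Module.finrank F P = 2 ∧ U ⊆ x +ᵥ (P : Set (Fin 3 → F)))
    (S₁ S₂ : Submodule F (Fin 3 → F)) (hne : S₁ ≠ S₂)
    (hS₁ : Module.finrank F S₁ = 2) (hS₂ : Module.finrank F S₂ = 2)
    (hnd₁ : ¬ IsDeterminedBy U S₁) (hnd₂ : ¬ IsDeterminedBy U S₂)
    (M : Submodule F (Fin 3 → F)) (hM : M = S₁ ⊓ S₂)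
    (h : ∃ (pf pg : Fin 3 → F) (D : Submodule F (Fin 3 → F)),
      Module.finrank F D = 1 ∧ D ≤ S₁ ∧
      pf +ᵥ (D : Set (Fin 3 → F)) ⊆ U ∧ pg +ᵥ (D : Set (Fin 3 → F)) ⊆ U ∧
      pf +ᵥ (D : Set (Fin 3 → F)) ≠ pg +ᵥ (D : Set (Fin 3 → F))) :
    U + (M : Set (Fin 3 → F)) = U := by
  classical
  obtain ⟨pf, pg, D, hD1, hDS₁, hfU, hgU, hfg⟩ := h
  have h3 : finrank F (Fin 3 → F) = 3 := by simp [finrank_pi]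
  -- M has rank 1
  have hMrank : finrank F M = 1 := by
    have hsup : finrank F ↥(S₁ ⊔ S₂) = 3 := by
      have hlt : S₁ < S₁ ⊔ S₂ := by
        refine lt_of_le_of_ne le_sup_left (fun hEq => hne ?_)
        have hle2 : S₂ ≤ S₁ := hEq ▸ le_sup_right
        exact (Submodule.eq_of_le_of_finrank_le hle2 (by rw [hS₁, hS₂])).symm
      have h1 : finrank F S₁ < finrank F ↥(S₁ ⊔ S₂) := Submodule.finrank_lt_finrank_of_lt hlt
      have h2 : finrank F ↥(S₁ ⊔ S₂) ≤ 3 := by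
        exact (Submodule.finrank_le _).trans h3.le
      rw [hS₁] at h1; omega
    have := Submodule.finrank_sup_add_finrank_inf_eq S₁ S₂
    rw [hsup, hS₁, hS₂, hM] at *
    omega
  -- D = span {d}
  have hDbot : D ≠ ⊥ := by
    intro hbot
    rw [hbot] at hD1
    simp at hD1
  obtain ⟨d, hdD, hdne⟩ := Submodule.exists_mem_ne_zero_of_ne_bot hDbot
  have hDspan : Submodule.span F {d} = D :=
    Submodule.eq_of_le_of_finrank_le
      ((Submodule.span_le).2 (by simpa using hdD))
      (by rw [finrank_span_singleton hdne, hD1])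
  have hdS₁ : d ∈ S₁ := hDS₁ hdD
  -- the two given lines
  have hcoset_line : ∀ p : Fin 3 → F, p +ᵥ (D : Set (Fin 3 → F)) = line p d := by
    intro p
    ext y
    rw [mem_coset, ← hDspan, Submodule.mem_span_singleton]
    constructor
    · rintro ⟨a, ha⟩
      exact ⟨a, by rw [ha]; abel⟩
    · rintro ⟨a, ha⟩
      exact ⟨a, by rw [ha]; abel⟩
  have hq2 : 2 ≤ q := by rw [← hq]; exact Fintype.one_lt_card
  -- a line with direction in S₁ contained in U is a full S₁-coset intersection
  have hline_eq : ∀ p v : Fin 3 → F, v ≠ 0 → v ∈ S₁ → line p v ⊆ U →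
      U ∩ (p +ᵥ (S₁ : Set (Fin 3 → F))) = line p v := by
    intro p v hv hvS hsub
    have hsub2 : line p v ⊆ U ∩ (p +ᵥ (S₁ : Set (Fin 3 → F))) := by
      rintro y ⟨t, ht⟩
      refine ⟨hsub ⟨t, ht⟩, mem_coset.2 ?_⟩
      rw [ht]
      simpa using S₁.smul_mem t hvS
    exact (Set.eq_of_subset_of_ncard_le hsub2
      (by rw [ncard_inter_eq hq hU hS₁ hnd₁ p, line_ncard hq hv]) (Set.toFinite _)).symm
  have hfUeq : U ∩ (pf +ᵥ (S₁ : Set (Fin 3 → F))) = line pf d :=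
    hline_eq pf d hdne hdS₁ (by rw [← hcoset_line pf]; exact hfU)
  have hgUeq : U ∩ (pg +ᵥ (S₁ : Set (Fin 3 → F))) = line pg d :=
    hline_eq pg d hdne hdS₁ (by rw [← hcoset_line pg]; exact hgU)
  have hfgne : line pf d ≠ line pg d := by
    rw [← hcoset_line pf, ← hcoset_line pg]; exact hfg
  have hcosets : pf +ᵥ (S₁ : Set (Fin 3 → F)) ≠ pg +ᵥ (S₁ : Set (Fin 3 → F)) := by
    intro hEq
    apply hfgne
    rw [← hfUeq, ← hgUeq, hEq]
  have hdisj : ∀ z, z ∈ line pf d → z ∈ line pg d → False := by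
    rintro z ⟨t₁, ht₁⟩ ⟨t₂, ht₂⟩
    apply hcosets
    apply coset_eq
    have e : pf - pg = (z - (t₂ • d + pg)) - (z - (t₁ • d + pf)) + (t₂ • d - t₁ • d) := by abel
    rw [← ht₁, ← ht₂] at e
    simp at e
    rw [e]
    exact S₁.sub_mem (S₁.smul_mem _ hdS₁) (S₁.smul_mem _ hdS₁)
  by_cases hbad : ∃ p₀ v₀ : Fin 3 → F, (v₀ ≠ 0 ∧ v₀ ∈ S₂ ∧
      U ∩ (p₀ +ᵥ (S₂ : Set (Fin 3 → F))) = line p₀ v₀) ∧ v₀ ∉ S₁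
  · -- bad case : some S₂-line is a transversal; then U lies in a plane
    exfalso
    obtain ⟨p₀, v₀, ⟨hv₀ne, hv₀S₂, hm₀⟩, hv₀S₁⟩ := hbad
    have hmU : line p₀ v₀ ⊆ U := by
      intro y hy
      have : y ∈ U ∩ (p₀ +ᵥ (S₂ : Set (Fin 3 → F))) := by rw [hm₀]; exact hy
      exact this.1
    -- the transversal meets f and g
    obtain ⟨t, ht⟩ := exists_cross hS₁ hv₀S₁ p₀ pf
    obtain ⟨s, hs⟩ := exists_cross hS₁ hv₀S₁ p₀ pg
    have haf : p₀ + t • v₀ ∈ line pf d := by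
      rw [← hfUeq]
      exact ⟨hmU ⟨t, by abel⟩, ht⟩
    have hbg : p₀ + s • v₀ ∈ line pg d := by
      rw [← hgUeq]
      exact ⟨hmU ⟨s, by abel⟩, hs⟩
    obtain ⟨α, hα⟩ := haf
    obtain ⟨β, hβ⟩ := hbg
    have hst : s ≠ t := by
      rintro rfl
      exact hdisj _ ⟨α, hα⟩ ⟨β, hβ⟩
    -- the plane T
    set T : Submodule F (Fin 3 → F) := Submodule.span F {d, v₀} with hT
    have hdT : d ∈ T := Submodule.subset_span (Set.mem_insert _ _)
    have hv₀T : v₀ ∈ T := Submodule.subset_span (Set.mem_insert_of_mem _ rfl)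
    have hli : LinearIndependent F ![d, v₀] :=
      (LinearIndependent.pair_iff' hdne).2 (fun a ha => hv₀S₁ (ha ▸ S₁.smul_mem a hdS₁))
    have hrange : Set.range ![d, v₀] = {d, v₀} := by
      ext y
      constructor
      · rintro ⟨i, rfl⟩
        fin_cases i <;> simp
      · rintro (rfl | rfl)
        exacts [⟨0, rfl⟩, ⟨1, rfl⟩]
    have hT2 : finrank F T = 2 := by
      rw [hT, ← hrange, finrank_span_eq_card hli]
      simp
    have hpgpf : pg - pf ∈ T := by
      have e : pg - pf = ((p₀ + s • v₀) - (p₀ + t • v₀)) + α • d - β • d := by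
        rw [hα, hβ]; abel
      have e2 : (p₀ + s • v₀) - (p₀ + t • v₀) = s • v₀ - t • v₀ := by abel
      rw [e, e2]
      exact T.sub_mem (T.add_mem (T.sub_mem (T.smul_mem _ hv₀T) (T.smul_mem _ hv₀T))
        (T.smul_mem _ hdT)) (T.smul_mem _ hdT)
    -- every point of U lies in the plane (p₀ + t•v₀) +ᵥ T
    have hsubT : U ⊆ (p₀ + t • v₀) +ᵥ (T : Set (Fin 3 → F)) := by
      intro u hu
      obtain ⟨p, v, hpU, hv, hvS₂, hline⟩ := key hq hU hS₂ hnd₂ u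
      have hself : u ∈ line p v := by
        rw [← hline]
        exact ⟨hu, mem_coset.2 (by simpa using S₂.zero_mem)⟩
      have hlineU : line p v ⊆ U := by
        intro y hy
        have : y ∈ U ∩ (u +ᵥ (S₂ : Set (Fin 3 → F))) := by rw [hline]; exact hy
        exact this.1
      by_cases hvS₁' : v ∈ S₁
      · -- the S₂-line through u is an S₁-coset intersection too; the transversal meets it
        exfalso
        have hUcoset : U ∩ (p +ᵥ (S₁ : Set (Fin 3 → F))) = line p v :=
          hline_eq p v hv hvS₁' hlineU
        obtain ⟨r, hr⟩ := exists_cross hS₁ hv₀S₁ p₀ p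
        have hcU : p₀ + r • v₀ ∈ U := hmU ⟨r, by abel⟩
        have hc_line : p₀ + r • v₀ ∈ line p v := by
          rw [← hUcoset]; exact ⟨hcU, hr⟩
        have h1 : p₀ + r • v₀ ∈ u +ᵥ (S₂ : Set (Fin 3 → F)) := by
          have : p₀ + r • v₀ ∈ U ∩ (u +ᵥ (S₂ : Set (Fin 3 → F))) := by
            rw [hline]; exact hc_line
          exact this.2
        have h2 : p₀ - u ∈ S₂ := by
          have ha1 := mem_coset.1 h1
          have e : p₀ - u = ((p₀ + r • v₀) - u) - r • v₀ := by abel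
          rw [e]
          exact S₂.sub_mem ha1 (S₂.smul_mem r hv₀S₂)
        have hll : line p₀ v₀ = line p v := by
          rw [← hm₀, ← hline, coset_eq h2]
        have hp1 : p ∈ line p₀ v₀ := by rw [hll]; exact ⟨0, by simp⟩
        have hp2 : v + p ∈ line p₀ v₀ := by rw [hll]; exact ⟨1, by simp⟩
        obtain ⟨x₁, hx₁⟩ := hp1
        obtain ⟨x₂, hx₂⟩ := hp2
        have hveq : v = (x₂ - x₁) • v₀ := by
          have e : v = (v + p) - p := by abel
          rw [e, hx₂, hx₁, sub_smul]; abel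
        have hx12 : x₂ - x₁ ≠ 0 := by
          intro h0
          apply hv
          rw [hveq, h0, zero_smul]
        apply hv₀S₁
        have e : v₀ = (x₂ - x₁)⁻¹ • v := by
          rw [hveq, smul_smul, inv_mul_cancel₀ hx12, one_smul]
        rw [e]
        exact S₁.smul_mem _ hvS₁'
      · -- the S₂-line through u is itself a transversal; it meets f and g inside the plane
        obtain ⟨t', ht'⟩ := exists_cross hS₁ hvS₁' p pf
        obtain ⟨s', hs'⟩ := exists_cross hS₁ hvS₁' p pg
        have haf' : p + t' • v ∈ line pf d := by
          rw [← hfUeq]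
          exact ⟨hlineU ⟨t', by abel⟩, ht'⟩
        have hbg' : p + s' • v ∈ line pg d := by
          rw [← hgUeq]
          exact ⟨hlineU ⟨s', by abel⟩, hs'⟩
        obtain ⟨α', hα'⟩ := haf'
        obtain ⟨β', hβ'⟩ := hbg'
        have hst' : s' ≠ t' := by
          rintro rfl
          exact hdisj _ ⟨α', hα'⟩ ⟨β', hβ'⟩
        have hdiffT : (p + s' • v) - (p + t' • v) ∈ T := by
          have e : (p + s' • v) - (p + t' • v) = (pg - pf) + (β' • d - α' • d) := by
            rw [hβ', hα']; abel
          rw [e]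
          exact T.add_mem hpgpf (T.sub_mem (T.smul_mem _ hdT) (T.smul_mem _ hdT))
        have hvT : v ∈ T := by
          have e : v = (s' - t')⁻¹ • ((p + s' • v) - (p + t' • v)) := by
            have e2 : (p + s' • v) - (p + t' • v) = (s' - t') • v := by
              rw [sub_smul]; abel
            rw [e2, smul_smul, inv_mul_cancel₀ (sub_ne_zero.2 hst'), one_smul]
          rw [e]
          exact T.smul_mem _ hdiffT
        obtain ⟨τ, hτ⟩ := hself
        have hp_eq : p = α' • d + pf - t' • v := by rw [← hα']; abel
        have e : u - (p₀ + t • v₀) = (τ • v - t' • v) + (α' • d - α • d) := by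
          rw [hτ, hp_eq, hα]
          abel
        refine mem_coset.2 ?_
        rw [e]
        exact T.add_mem (T.sub_mem (T.smul_mem _ hvT) (T.smul_mem _ hvT))
          (T.sub_mem (T.smul_mem _ hdT) (T.smul_mem _ hdT))
    exact hplane ⟨p₀ + t • v₀, T, hT2, hsubT⟩
  · -- good case: every S₂-coset line has direction in M
    push_neg at hbad
    apply Set.Subset.antisymm
    · intro z hz
      rw [Set.mem_add] at hz
      obtain ⟨u, hu, m, hm, rfl⟩ := hz
      obtain ⟨p, v, hpU, hv, hvS₂, hline⟩ := key hq hU hS₂ hnd₂ u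
      have hpmem : p ∈ U ∩ (u +ᵥ (S₂ : Set (Fin 3 → F))) := by
        rw [hline]; exact ⟨0, by simp⟩
      have hcoset_eq : p +ᵥ (S₂ : Set (Fin 3 → F)) = u +ᵥ (S₂ : Set (Fin 3 → F)) :=
        coset_eq (mem_coset.1 hpmem.2)
      have hvS₁' : v ∈ S₁ := hbad p v ⟨hv, hvS₂, by rw [hcoset_eq]; exact hline⟩
      have hvM : v ∈ M := by rw [hM]; exact ⟨hvS₁', hvS₂⟩
      have hMspan : Submodule.span F {v} = M :=
        Submodule.eq_of_le_of_finrank_le ((Submodule.span_le).2 (by simpa using hvM))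
          (by rw [finrank_span_singleton hv, hMrank])
      obtain ⟨t, ht⟩ := Submodule.mem_span_singleton.1 (by rw [hMspan]; exact hm)
      have hself : u ∈ line p v := by
        rw [← hline]
        exact ⟨hu, mem_coset.2 (by simpa using S₂.zero_mem)⟩
      obtain ⟨s, hs⟩ := hself
      have humem : u + m ∈ line p v := ⟨s + t, by rw [hs, ← ht, add_smul]; abel⟩
      have : u + m ∈ U ∩ (u +ᵥ (S₂ : Set (Fin 3 → F))) := by rw [hline]; exact humem
      exact this.1
    · intro u hu
      exact Set.mem_add.2 ⟨u, hu, 0, M.zero_mem, add_zero u⟩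
end

section
/- Let F be a finite field with q elements and let U ⊆ F³ with |U| = q²; assume U is not contained in any affine plane of F³. Suppose there are at least three pairwise distinct 2-dimensional F-linear subspaces of F³ whose corresponding lines at infinity are undetermined by U. Let S₁ be one of these undetermined subspaces, and suppose there exist two distinct parallel affine lines f, g contained in U whose directions are contained in S₁; let D be their common direction. Then every 2-dimensional F-linear subspace whose corresponding line at infinity is undetermined by U contains D; that is, all the undetermined lines at infinity pass through the common ideal point of the lines of U. -/
open Pointwise

/-- If the line at infinity of a plane (2-dim subspace) `S` is undetermined by `U`, then
the intersection of `U` with every coset of `S` is collinear. -/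
lemma collinear_of_not_determined {F : Type*} [Field F] [Fintype F]
    {U : Set (Fin 3 → F)} {S : Submodule F (Fin 3 → F)}
    (hS : Module.finrank F S = 2) (hnd : ¬ IsDeterminedBy U S) (x : Fin 3 → F) :
    Collinear F (U ∩ (x +ᵥ (S : Set (Fin 3 → F)))) := by
  by_contra hcol
  apply hnd
  refine ⟨x, ?_⟩
  set t := U ∩ (x +ᵥ (S : Set (Fin 3 → F))) with ht
  have hcoset : ∀ p ∈ x +ᵥ (S : Set (Fin 3 → F)), ∀ q ∈ x +ᵥ (S : Set (Fin 3 → F)),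
      p - q ∈ S := by
    rintro p hp q hq
    obtain ⟨a, ha, rfl⟩ := hp
    obtain ⟨b, hb, rfl⟩ := hq
    simpa [vadd_eq_add, add_sub_add_left_eq_sub] using S.sub_mem ha hb
  have htS : ∀ p ∈ t, ∀ q ∈ t, p - q ∈ S := fun p hp q hq => hcoset p hp.2 q hq.2
  have hle : vectorSpan F t ≤ S := by
    rw [vectorSpan_def]
    apply Submodule.span_le.2
    rintro v ⟨a, ha, b, hb, rfl⟩
    exact htS a ha b hb
  have hrank : 1 < Module.rank F (vectorSpan F t) := lt_of_not_ge hcol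
  have hfin : 2 ≤ Module.finrank F (vectorSpan F t) := by
    have hcast := (Module.finrank_eq_rank F (vectorSpan F t)).symm
    rw [hcast] at hrank
    exact_mod_cast hrank
  have heq : vectorSpan F t = S :=
    Submodule.eq_of_le_of_finrank_le hle (by omega)
  obtain ⟨p, hp⟩ : t.Nonempty := by
    rcases t.eq_empty_or_nonempty with h | h
    · exact absurd (h ▸ collinear_empty F _) hcol
    · exact h
  intro y hy
  have hyp : y - p ∈ (affineSpan F t).direction := by
    rw [direction_affineSpan, heq]
    exact hcoset y hy p hp.2
  have := AffineSubspace.vadd_mem_of_mem_direction hyp (mem_affineSpan F hp)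
  simpa [vadd_eq_add, sub_add_cancel] using this

/-- Corollary 6 in the paper: assume `U` is not contained in any affine
plane and at least three pairwise distinct lines at infinity are undetermined, `S₁` being
one of them. If `U` contains two distinct parallel affine lines with common direction
`D ≤ S₁`, then every undetermined line at infinity passes through the common ideal point,
i.e. every 2-dimensional undetermined subspace contains `D`. -/
theorem stmt_13 {F : Type*} [Field F] [Fintype F] {q : ℕ}
    (hq : Fintype.card F = q)
    (U : Set (Fin 3 → F)) (hU : U.ncard = q ^ 2)
    (hplane : ¬ ∃ (x : Fin 3 → F) (P : Submodule F (Fin 3 → F)),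
      Module.finrank F P = 2 ∧ U ⊆ x +ᵥ (P : Set (Fin 3 → F)))
    (S₁ S₂ S₃ : Submodule F (Fin 3 → F))
    (h12 : S₁ ≠ S₂) (h13 : S₁ ≠ S₃) (h23 : S₂ ≠ S₃)
    (hS₁ : Module.finrank F S₁ = 2) (hS₂ : Module.finrank F S₂ = 2)
    (hS₃ : Module.finrank F S₃ = 2)
    (hnd₁ : ¬ IsDeterminedBy U S₁) (hnd₂ : ¬ IsDeterminedBy U S₂)
    (hnd₃ : ¬ IsDeterminedBy U S₃)
    (pf pg : Fin 3 → F) (D : Submodule F (Fin 3 → F))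
    (hD : Module.finrank F D = 1) (hDS : D ≤ S₁)
    (hf : pf +ᵥ (D : Set (Fin 3 → F)) ⊆ U)
    (hg : pg +ᵥ (D : Set (Fin 3 → F)) ⊆ U)
    (hfg : pf +ᵥ (D : Set (Fin 3 → F)) ≠ pg +ᵥ (D : Set (Fin 3 → F))) :
    ∀ S : Submodule F (Fin 3 → F), Module.finrank F S = 2 →
      ¬ IsDeterminedBy U S → D ≤ S := by
  intro S hS2 hndS
  by_contra hnD
  -- pick a direction vector of D not lying in S
  obtain ⟨d₀, hd₀D, hd₀S⟩ : ∃ d₀, d₀ ∈ D ∧ d₀ ∉ S := by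
    simpa using SetLike.not_le_iff_exists.1 hnD
  have hd₀0 : d₀ ≠ 0 := fun h => hd₀S (h ▸ S.zero_mem)
  -- `S ⊔ span{d₀} = ⊤`, giving a decomposition of every vector
  have hinfS : S ⊓ Submodule.span F {d₀} = ⊥ := by
    rw [eq_bot_iff]
    rintro z ⟨hzS, hzd⟩
    obtain ⟨c, rfl⟩ := Submodule.mem_span_singleton.1 hzd
    rcases eq_or_ne c 0 with rfl | hc
    · simp
    · exact absurd (by simpa [smul_smul, inv_mul_cancel₀ hc] using S.smul_mem c⁻¹ hzS) hd₀S
  have hsup : S ⊔ Submodule.span F {d₀} = ⊤ := by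
    have hV : Module.finrank F (Fin 3 → F) = 3 := by simp
    apply Submodule.eq_top_of_finrank_eq
    have := Submodule.finrank_sup_add_finrank_inf_eq S (Submodule.span F {d₀})
    rw [hinfS, hS2, finrank_span_singleton hd₀0] at this
    simp only [finrank_bot, add_zero] at this
    rw [this, hV]
  have decomp : ∀ v : Fin 3 → F, ∃ c : F, v - c • d₀ ∈ S := by
    intro v
    have hv : v ∈ S ⊔ Submodule.span F {d₀} := by rw [hsup]; trivial
    obtain ⟨s, hs, z, hz, rfl⟩ := Submodule.mem_sup.1 hv
    obtain ⟨c, rfl⟩ := Submodule.mem_span_singleton.1 hz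
    exact ⟨c, by simpa using hs⟩
  have uniq : ∀ c : F, c • d₀ ∈ S → c = 0 := by
    intro c hc
    by_contra h
    exact hd₀S (by simpa [smul_smul, inv_mul_cancel₀ h] using S.smul_mem c⁻¹ hc)
  -- the constant vector `w`
  obtain ⟨cs, hws⟩ := decomp (pg - pf)
  set w : Fin 3 → F := pg - pf - cs • d₀ with hw
  have hwS : w ∈ S := hws
  have hwD : w ∉ D := by
    intro hmem
    apply hfg
    have hpfg : pg - pf ∈ D := by
      have : pg - pf = w + cs • d₀ := by rw [hw]; ring
      rw [this]
      exact D.add_mem hmem (D.smul_mem cs hd₀D)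
    ext y
    simp only [Set.mem_vadd_set, vadd_eq_add]
    constructor
    · rintro ⟨b, hb, rfl⟩
      exact ⟨b - (pg - pf), D.sub_mem hb hpfg, by ring⟩
    · rintro ⟨b, hb, rfl⟩
      exact ⟨b + (pg - pf), D.add_mem hb hpfg, by ring⟩
  have hw0 : w ≠ 0 := fun h => hwD (h ▸ D.zero_mem)
  -- every point of U lies in pf + (D ⊔ span{w})
  set P : Submodule F (Fin 3 → F) := D ⊔ Submodule.span F {w} with hP
  have key : U ⊆ pf +ᵥ (P : Set (Fin 3 → F)) := by
    intro u hu
    obtain ⟨c, hc⟩ := decomp (u - pf)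
    obtain ⟨c', hc'⟩ := decomp (u - pg)
    set p : Fin 3 → F := pf + c • d₀ with hpdef
    set r : Fin 3 → F := pg + c' • d₀ with hrdef
    -- p, r, u all belong to U ∩ (u + S)
    have hpu : p - u ∈ S := by
      have : p - u = -(u - pf - c • d₀) := by rw [hpdef]; ring
      rw [this]; exact S.neg_mem hc
    have hru : r - u ∈ S := by
      have : r - u = -(u - pg - c' • d₀) := by rw [hrdef]; ring
      rw [this]; exact S.neg_mem hc'
    have hpmem : p ∈ U ∩ (u +ᵥ (S : Set (Fin 3 → F))) := by
      refine ⟨hf (Set.mem_vadd_set.2 ⟨c • d₀, D.smul_mem c hd₀D, rfl⟩),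
        Set.mem_vadd_set.2 ⟨p - u, hpu, by simp [vadd_eq_add]⟩⟩
    have hrmem : r ∈ U ∩ (u +ᵥ (S : Set (Fin 3 → F))) := by
      refine ⟨hg (Set.mem_vadd_set.2 ⟨c' • d₀, D.smul_mem c' hd₀D, rfl⟩),
        Set.mem_vadd_set.2 ⟨r - u, hru, by simp [vadd_eq_add]⟩⟩
    have humem : u ∈ U ∩ (u +ᵥ (S : Set (Fin 3 → F))) :=
      ⟨hu, Set.mem_vadd_set.2 ⟨0, S.zero_mem, by simp [vadd_eq_add]⟩⟩
    -- r - p = w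
    have hrp : r - p = w := by
      have h1 : r - p - w = (c' - c + cs) • d₀ := by
        rw [hrdef, hpdef, hw]
        simp only [sub_smul, add_smul]
        abel
      have hrpS : r - p ∈ S := by
        have h3 : r - p = (r - u) - (p - u) := by abel
        rw [h3]; exact S.sub_mem hru hpu
      have h2 : (c' - c + cs) • d₀ ∈ S := by
        rw [← h1]; exact S.sub_mem hrpS hwS
      have h4 := uniq _ h2
      rw [h4, zero_smul, sub_eq_zero] at h1
      exact h1
    -- collinearity forces u on the line through p and r
    have hcol := collinear_of_not_determined hS2 hndS u
    obtain ⟨v, hv⟩ := (collinear_iff_of_mem hpmem).1 hcol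
    obtain ⟨a, ha⟩ := hv u humem
    obtain ⟨b, hb⟩ := hv r hrmem
    have hbv : b • v = w := by
      rw [← hrp, hb]; simp [vadd_eq_add]
    have hb0 : b ≠ 0 := by
      intro h
      rw [h, zero_smul] at hbv
      exact hw0 hbv.symm
    have huval : u = pf + (c • d₀ + (a * b⁻¹) • w) := by
      rw [ha]
      rw [← hbv]
      simp only [vadd_eq_add, hpdef, smul_smul]
      rw [mul_assoc, inv_mul_cancel₀ hb0, mul_one]
      ring
    refine Set.mem_vadd_set.2 ⟨c • d₀ + (a * b⁻¹) • w, ?_, by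
      simpa [vadd_eq_add] using huval.symm⟩
    exact P.add_mem (Submodule.mem_sup_left (D.smul_mem c hd₀D))
      (Submodule.mem_sup_right (Submodule.smul_mem _ _ (Submodule.mem_span_singleton_self w)))
  -- P is a plane, contradicting hplane
  have hinfD : D ⊓ Submodule.span F {w} = ⊥ := by
    rw [eq_bot_iff]
    rintro z ⟨hzD, hzw⟩
    obtain ⟨c, rfl⟩ := Submodule.mem_span_singleton.1 hzw
    rcases eq_or_ne c 0 with rfl | hc
    · simp
    · exact absurd (by simpa [smul_smul, inv_mul_cancel₀ hc] using D.smul_mem c⁻¹ hzD) hwD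
  have hP2 : Module.finrank F P = 2 := by
    have := Submodule.finrank_sup_add_finrank_inf_eq D (Submodule.span F {w})
    rw [hinfD, hD, finrank_span_singleton hw0] at this
    simpa [hP] using this
  exact hplane ⟨pf, P, hP2, key⟩
end

section
/- Let F be a finite field with q elements and let U ⊆ F³ with |U| = q²; assume U is not contained in any affine plane of F³. Let S₁ ≠ S₂ be two 2-dimensional F-linear subspaces of F³ whose corresponding lines at infinity are both undetermined by U, and let M = S₁ ∩ S₂ (a 1-dimensional subspace). If there exist two affine lines contained in U with directions contained in S₁ that are not parallel, then any two distinct affine lines contained in U with directions contained in S₁ have distinct directions, and no affine line contained in U with direction contained in S₁ has direction M. -/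
set_option linter.unusedSectionVars false
set_option maxHeartbeats 1000000
open Module Set


open Pointwise

section Helpers

variable {F : Type*} [Field F] [Fintype F]

lemma mem_vadd_sub {S : Submodule F (Fin 3 → F)} {x y : Fin 3 → F} :
    y ∈ x +ᵥ (S : Set (Fin 3 → F)) ↔ y - x ∈ S := by
  rw [mem_vadd_set_iff_neg_vadd_mem]; simp [sub_eq_neg_add]

lemma ncard_vadd_sub (S : Submodule F (Fin 3 → F)) (x : Fin 3 → F) :
    (x +ᵥ (S : Set (Fin 3 → F))).ncard = Fintype.card F ^ finrank F S := by
  rw [← Set.image_vadd]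
  simp only [vadd_eq_add]
  have : Fintype ↥S := Fintype.ofFinite _
  rw [Set.ncard_image_of_injective _ (add_right_injective x),
    ← Nat.card_coe_set_eq]
  show Nat.card ↥S = _
  rw [Nat.card_eq_fintype_card, card_eq_pow_finrank (K := F)]

lemma vadd_set_eq_of_sub_mem {S : Submodule F (Fin 3 → F)} {p p' : Fin 3 → F}
    (h : p' - p ∈ S) : p +ᵥ (S : Set (Fin 3 → F)) = p' +ᵥ (S : Set (Fin 3 → F)) := by
  ext y
  rw [mem_vadd_sub, mem_vadd_sub]
  constructor
  · intro hy; have := S.sub_mem hy h; simpa using this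
  · intro hy; have := S.add_mem hy h; simpa [sub_add_sub_cancel] using this

lemma sub_mem_of_vadd_eq {D D' : Submodule F (Fin 3 → F)} {p p' : Fin 3 → F}
    (h : p +ᵥ (D : Set (Fin 3 → F)) = p' +ᵥ (D' : Set (Fin 3 → F))) : p' - p ∈ D := by
  have : p' ∈ p' +ᵥ (D' : Set (Fin 3 → F)) := mem_vadd_sub.2 (by simp)
  rw [← h, mem_vadd_sub] at this; exact this

lemma direction_eq_of_vadd_eq {D D' : Submodule F (Fin 3 → F)} {p p' : Fin 3 → F}
    (h : p +ᵥ (D : Set (Fin 3 → F)) = p' +ᵥ (D' : Set (Fin 3 → F))) : D = D' := by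
  have h1 : p' - p ∈ D := sub_mem_of_vadd_eq h
  have h2 : p - p' ∈ D' := sub_mem_of_vadd_eq h.symm
  ext v
  constructor
  · intro hv
    have : p + v ∈ p +ᵥ (D : Set (Fin 3 → F)) := mem_vadd_sub.2 (by simpa)
    rw [h, mem_vadd_sub] at this
    have hv' := D'.sub_mem this h2
    have he : (p + v - p') - (p - p') = v := by abel
    rwa [he] at hv'
  · intro hv
    have : p' + v ∈ p' +ᵥ (D' : Set (Fin 3 → F)) := mem_vadd_sub.2 (by simpa)
    rw [← h, mem_vadd_sub] at this
    have hv' := D.sub_mem this h1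
    have he : (p' + v - p) - (p' - p) = v := by abel
    rwa [he] at hv'

lemma sup_eq_top_of_proper_lt {S T : Submodule F (Fin 3 → F)}
    (hS : finrank F S = 2) (hlt : S < S ⊔ T) : S ⊔ T = ⊤ := by
  apply Submodule.eq_top_of_finrank_eq
  have h3 : finrank F (Fin 3 → F) = 3 := Module.finrank_fin_fun F
  have hle : finrank F ↥(S ⊔ T) ≤ finrank F (Fin 3 → F) := Submodule.finrank_le _
  rw [h3] at hle
  have hgt : 2 < finrank F ↥(S ⊔ T) := hS ▸ Submodule.finrank_lt_finrank_of_lt hlt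
  omega

lemma finrank_inf_eq_one {S₁ S₂ : Submodule F (Fin 3 → F)} (hne : S₁ ≠ S₂)
    (h1 : finrank F S₁ = 2) (h2 : finrank F S₂ = 2) : finrank F ↥(S₁ ⊓ S₂) = 1 := by
  have hlt : S₁ < S₁ ⊔ S₂ := by
    rcases lt_or_eq_of_le (le_sup_left : S₁ ≤ S₁ ⊔ S₂) with h | h
    · exact h
    · exact absurd (Submodule.eq_of_le_of_finrank_eq (le_trans le_sup_right h.symm.le)
        (h2.trans h1.symm)).symm hne
  have htop := sup_eq_top_of_proper_lt h1 hlt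
  have := Submodule.finrank_sup_add_finrank_inf_eq S₁ S₂
  rw [htop] at this
  have h3 : finrank F (⊤ : Submodule F (Fin 3 → F)) = 3 := by
    rw [finrank_top]; exact Module.finrank_fin_fun F
  omega

lemma span_sup_eq_top {d : Fin 3 → F} {S : Submodule F (Fin 3 → F)}
    (hS : finrank F S = 2) (hd : d ∉ S) : S ⊔ Submodule.span F {d} = ⊤ := by
  apply sup_eq_top_of_proper_lt hS
  rcases lt_or_eq_of_le (le_sup_left : S ≤ S ⊔ _) with h | h
  · exact h
  · exfalso; apply hd; rw [h]
    exact Submodule.mem_sup_right (Submodule.mem_span_singleton_self d)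

lemma exists_decomp {d : Fin 3 → F} {S : Submodule F (Fin 3 → F)}
    (htop : S ⊔ Submodule.span F {d} = ⊤) (v : Fin 3 → F) :
    ∃ (c : F) (s : Fin 3 → F), s ∈ S ∧ v = c • d + s := by
  have : v ∈ S ⊔ Submodule.span F {d} := htop ▸ Submodule.mem_top
  rcases Submodule.mem_sup.1 this with ⟨s, hs, a, ha, hv⟩
  rcases Submodule.mem_span_singleton.1 ha with ⟨c, rfl⟩
  exact ⟨c, s, hs, by rw [← hv]; abel⟩

lemma eq_of_dim1_le_dim1 {D E : Submodule F (Fin 3 → F)} (hD : finrank F D = 1)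
    (hE : finrank F E = 1) (h : D ≤ E) : D = E :=
  Submodule.eq_of_le_of_finrank_eq h (hD.trans hE.symm)

lemma fiber_subset_line (U : Set (Fin 3 → F)) {S : Submodule F (Fin 3 → F)}
    (hS : finrank F S = 2) (hnd : ¬ IsDeterminedBy U S) (x : Fin 3 → F) :
    ∃ (p : Fin 3 → F) (D : Submodule F (Fin 3 → F)), finrank F D ≤ 1 ∧ D ≤ S ∧
      U ∩ (x +ᵥ (S : Set (Fin 3 → F))) ⊆ p +ᵥ (D : Set (Fin 3 → F)) := by
  by_cases hA : (U ∩ (x +ᵥ (S : Set (Fin 3 → F)))).Nonempty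
  · obtain ⟨a, ha⟩ := hA
    set A := U ∩ (x +ᵥ (S : Set (Fin 3 → F))) with hAdef
    set W := affineSpan F A with hWdef
    have haW : a ∈ W := subset_affineSpan F A ha
    have hWsub : W ≤ AffineSubspace.mk' x S := by
      rw [hWdef, affineSpan_le]
      intro y hy
      rw [SetLike.mem_coe, AffineSubspace.mem_mk']
      exact mem_vadd_sub.1 hy.2
    have hdir : W.direction ≤ S := by
      have := AffineSubspace.direction_le hWsub
      rwa [AffineSubspace.direction_mk'] at this
    have hfr : finrank F W.direction ≤ 1 := by
      by_contra hcon
      push_neg at hcon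
      have hle2 : finrank F W.direction ≤ 2 := hS ▸ Submodule.finrank_mono hdir
      have heq : W.direction = S := Submodule.eq_of_le_of_finrank_eq hdir (by omega)
      apply hnd
      refine ⟨x, ?_⟩
      intro y hy
      have hyx : y - x ∈ S := mem_vadd_sub.1 hy
      have hax : a - x ∈ S := mem_vadd_sub.1 ha.2
      have hya : y - a ∈ W.direction := by
        rw [heq]
        have he : y - a = (y - x) - (a - x) := by abel
        rw [he]; exact S.sub_mem hyx hax
      have := AffineSubspace.vadd_mem_of_mem_direction hya haW
      simpa [vadd_eq_add, sub_add_cancel] using this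
    refine ⟨a, W.direction, hfr, hdir, ?_⟩
    intro y hy
    have hyW : y ∈ W := subset_affineSpan F A hy
    exact mem_vadd_sub.2 (AffineSubspace.vsub_mem_direction hyW haW)
  · exact ⟨x, ⊥, by simp, bot_le, by
      rw [Set.not_nonempty_iff_eq_empty.1 hA]; exact Set.empty_subset _⟩

lemma fiber_card_le {q : ℕ} (hq : Fintype.card F = q) (U : Set (Fin 3 → F))
    {S : Submodule F (Fin 3 → F)} (hS : finrank F S = 2) (hnd : ¬ IsDeterminedBy U S)
    (y : Fin 3 → F) : (U ∩ (y +ᵥ (S : Set (Fin 3 → F)))).ncard ≤ q := by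
  obtain ⟨p, D, h1, _, hsub⟩ := fiber_subset_line U hS hnd y
  have hfin : (p +ᵥ (D : Set (Fin 3 → F))).Finite := Set.toFinite _
  calc (U ∩ (y +ᵥ (S : Set (Fin 3 → F)))).ncard ≤ (p +ᵥ (D : Set (Fin 3 → F))).ncard :=
        Set.ncard_le_ncard hsub hfin
    _ = q ^ finrank F D := by rw [ncard_vadd_sub, hq]
    _ ≤ q ^ 1 := Nat.pow_le_pow_right (by have := Fintype.one_lt_card (α := F); omega) h1
    _ = q := pow_one q

lemma fiber_eq_line {q : ℕ} (hq : Fintype.card F = q) (U : Set (Fin 3 → F))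
    (hU : U.ncard = q ^ 2) {S : Submodule F (Fin 3 → F)}
    (hS : finrank F S = 2) (hnd : ¬ IsDeterminedBy U S) (x : Fin 3 → F) :
    ∃ (p : Fin 3 → F) (D : Submodule F (Fin 3 → F)), finrank F D = 1 ∧ D ≤ S ∧
      U ∩ (x +ᵥ (S : Set (Fin 3 → F))) = p +ᵥ (D : Set (Fin 3 → F)) ∧ p ∈ U := by
  classical
  have hq2 : 2 ≤ q := by have := Fintype.one_lt_card (α := F); omega
  -- the quotient
  haveI : Fintype ((Fin 3 → F) ⧸ S) := Fintype.ofFinite _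
  have hcardQ : Fintype.card ((Fin 3 → F) ⧸ S) = q := by
    rw [card_eq_pow_finrank (K := F), hq]
    have hfr : finrank F ((Fin 3 → F) ⧸ S) = 1 := by
      have h5 := Submodule.finrank_quotient_add_finrank S
      have h3 : finrank F (Fin 3 → F) = 3 := Module.finrank_fin_fun F
      omega
    rw [hfr, pow_one]
  -- fibers as cosets
  have hfiber : ∀ y : Fin 3 → F,
      S.mkQ ⁻¹' {S.mkQ y} = y +ᵥ (S : Set (Fin 3 → F)) := by
    intro y
    ext z
    simp only [Set.mem_preimage, Set.mem_singleton_iff, Submodule.mkQ_apply,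
      Submodule.Quotient.eq, mem_vadd_sub]
  -- counting
  have hcount : ∀ y : Fin 3 → F, (U ∩ (y +ᵥ (S : Set (Fin 3 → F)))).ncard = q := by
    intro y
    let s : Finset (Fin 3 → F) := U.toFinset
    have hsum : s.card = ∑ c : (Fin 3 → F) ⧸ S, (s.filter (fun z => S.mkQ z = c)).card :=
      Finset.card_eq_sum_card_fiberwise (fun z _ => Finset.mem_univ _)
    have hfilter : ∀ c : (Fin 3 → F) ⧸ S, (s.filter (fun z => S.mkQ z = c)).card
        = (U ∩ S.mkQ ⁻¹' {c}).ncard := by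
      intro c
      rw [Set.ncard_eq_toFinset_card']
      congr 1
      ext z
      simp [s, Set.mem_toFinset]
      exact Finset.mem_filter.trans (and_congr_left' Set.mem_toFinset)
    have hle : ∀ c : (Fin 3 → F) ⧸ S, c ∈ Finset.univ → (s.filter (fun z => S.mkQ z = c)).card ≤ q := by
      intro c _
      obtain ⟨y', rfl⟩ := Submodule.mkQ_surjective S c
      rw [hfilter, hfiber]
      exact fiber_card_le hq U hS hnd y'
    have hcards : s.card = q ^ 2 := by rw [← hU, Set.ncard_eq_toFinset_card']
    have htot : ∑ c : (Fin 3 → F) ⧸ S, (s.filter (fun z => S.mkQ z = c)).card = ∑ _c : (Fin 3 → F) ⧸ S, q := by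
      rw [← hsum, hcards, Finset.sum_const, Finset.card_univ, hcardQ, smul_eq_mul, sq]
    have := (Finset.sum_eq_sum_iff_of_le hle).1 htot (S.mkQ y) (Finset.mem_univ _)
    rw [hfilter, hfiber] at this
    exact this
  -- now at x
  obtain ⟨p, D, h1, hDS, hsub⟩ := fiber_subset_line U hS hnd x
  have hA : (U ∩ (x +ᵥ (S : Set (Fin 3 → F)))).ncard = q := hcount x
  have hfin : (p +ᵥ (D : Set (Fin 3 → F))).Finite := Set.toFinite _
  have hDcard : (p +ᵥ (D : Set (Fin 3 → F))).ncard = q ^ finrank F D := by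
    rw [ncard_vadd_sub, hq]
  have hD1 : finrank F D = 1 := by
    rcases Nat.lt_or_ge (finrank F D) 1 with h | h
    · exfalso
      have h0 : finrank F D = 0 := by omega
      have : q ≤ q ^ (0:ℕ) := by
        rw [← h0, ← hDcard, ← hA]
        exact Set.ncard_le_ncard hsub hfin
      simp at this; omega
    · omega
  have hqcard : (p +ᵥ (D : Set (Fin 3 → F))).ncard = q := by rw [hDcard, hD1, pow_one]
  have heq : U ∩ (x +ᵥ (S : Set (Fin 3 → F))) = p +ᵥ (D : Set (Fin 3 → F)) :=
    Set.eq_of_subset_of_ncard_le hsub (by omega) hfin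
  have hpU : p ∈ U := by
    have : p ∈ p +ᵥ (D : Set (Fin 3 → F)) := mem_vadd_sub.2 (by simp)
    rw [← heq] at this
    exact this.1
  exact ⟨p, D, hD1, hDS, heq, hpU⟩

lemma line_eq_fiber {q : ℕ} (hq : Fintype.card F = q) (U : Set (Fin 3 → F))
    (hU : U.ncard = q ^ 2) {S : Submodule F (Fin 3 → F)}
    (hS : finrank F S = 2) (hnd : ¬ IsDeterminedBy U S)
    {p : Fin 3 → F} {D : Submodule F (Fin 3 → F)} (hD1 : finrank F D = 1)
    (hDS : D ≤ S) (hsub : p +ᵥ (D : Set (Fin 3 → F)) ⊆ U) :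
    p +ᵥ (D : Set (Fin 3 → F)) = U ∩ (p +ᵥ (S : Set (Fin 3 → F))) := by
  obtain ⟨p', D', h1, _, heq, _⟩ := fiber_eq_line hq U hU hS hnd p
  have hsub2 : p +ᵥ (D : Set (Fin 3 → F)) ⊆ U ∩ (p +ᵥ (S : Set (Fin 3 → F))) :=
    Set.subset_inter hsub (fun y hy => mem_vadd_sub.2 (hDS (mem_vadd_sub.1 hy)))
  refine Set.eq_of_subset_of_ncard_le hsub2 ?_ (Set.toFinite _)
  rw [heq, ncard_vadd_sub, ncard_vadd_sub, h1, hD1]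

lemma claim2 {q : ℕ} (hq : Fintype.card F = q) (U : Set (Fin 3 → F))
    (hU : U.ncard = q ^ 2) {S₁ S₂ : Submodule F (Fin 3 → F)} (hne : S₁ ≠ S₂)
    (hS₁ : finrank F S₁ = 2) (hS₂ : finrank F S₂ = 2)
    (hnd₁ : ¬ IsDeterminedBy U S₁) (hnd₂ : ¬ IsDeterminedBy U S₂)
    {p' : Fin 3 → F} {D' : Submodule F (Fin 3 → F)} (hD'1 : finrank F D' = 1)
    (hD'S : D' ≤ S₁) (hl' : p' +ᵥ (D' : Set (Fin 3 → F)) ⊆ U) (hD'M : D' ≠ S₁ ⊓ S₂)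
    {p : Fin 3 → F} {D : Submodule F (Fin 3 → F)} (hD1 : finrank F D = 1)
    (hDS : D ≤ S₁) (hsub : p +ᵥ (D : Set (Fin 3 → F)) ⊆ U) : D ≠ S₁ ⊓ S₂ := by
  intro hDM
  have hMS₂ : D ≤ S₂ := hDM ▸ inf_le_right
  have hfib₂ : p +ᵥ (D : Set (Fin 3 → F)) = U ∩ (p +ᵥ (S₂ : Set (Fin 3 → F))) :=
    line_eq_fiber hq U hU hS₂ hnd₂ hD1 hMS₂ hsub
  have hnle : ¬ D' ≤ S₂ := fun hle => hD'M
    (eq_of_dim1_le_dim1 hD'1 (finrank_inf_eq_one hne hS₁ hS₂) (le_inf hD'S hle))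
  obtain ⟨d, hdD', hdS₂⟩ := SetLike.not_le_iff_exists.1 hnle
  obtain ⟨c, s, hs, hdecomp⟩ := exists_decomp (span_sup_eq_top hS₂ hdS₂) (p - p')
  set z := p' + c • d with hzdef
  have hz1 : z ∈ p' +ᵥ (D' : Set (Fin 3 → F)) := mem_vadd_sub.2 (by
    have : z - p' = c • d := by rw [hzdef]; abel
    rw [this]; exact D'.smul_mem c hdD')
  have hz2 : z ∈ p +ᵥ (S₂ : Set (Fin 3 → F)) := mem_vadd_sub.2 (by
    have hp : p = c • d + s + p' := by rw [← hdecomp]; abel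
    have : z - p = -s := by rw [hzdef, hp]; abel
    rw [this]; exact S₂.neg_mem hs)
  have hzD : z ∈ p +ᵥ (D : Set (Fin 3 → F)) := by rw [hfib₂]; exact ⟨hl' hz1, hz2⟩
  have h1 : z - p ∈ S₁ := hDS (mem_vadd_sub.1 hzD)
  have h2 : z - p' ∈ S₁ := hD'S (mem_vadd_sub.1 hz1)
  have hpp' : p - p' ∈ S₁ := by
    have := S₁.sub_mem h2 h1
    have he : (z - p') - (z - p) = p - p' := by abel
    rwa [he] at this
  have hfa : p +ᵥ (D : Set (Fin 3 → F)) = U ∩ (p +ᵥ (S₁ : Set (Fin 3 → F))) :=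
    line_eq_fiber hq U hU hS₁ hnd₁ hD1 hDS hsub
  have hfb : p' +ᵥ (D' : Set (Fin 3 → F)) = U ∩ (p' +ᵥ (S₁ : Set (Fin 3 → F))) :=
    line_eq_fiber hq U hU hS₁ hnd₁ hD'1 hD'S hl'
  rw [vadd_set_eq_of_sub_mem hpp', ← hfa] at hfb
  exact hD'M ((direction_eq_of_vadd_eq hfb).trans hDM)

lemma sub_mem_dir {E : Submodule F (Fin 3 → F)} {r w z : Fin 3 → F}
    (hw : w ∈ r +ᵥ (E : Set (Fin 3 → F))) (hz : z ∈ r +ᵥ (E : Set (Fin 3 → F))) :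
    w - z ∈ E := by
  have := E.sub_mem (mem_vadd_sub.1 hw) (mem_vadd_sub.1 hz)
  have he : (w - r) - (z - r) = w - z := by abel
  rwa [he] at this

lemma finrank_sup_le_two {D E : Submodule F (Fin 3 → F)} (hD : finrank F D = 1)
    (hE : finrank F E ≤ 1) : finrank F ↥(D ⊔ E) ≤ 2 := by
  have := Submodule.finrank_sup_add_finrank_inf_eq D E
  omega

lemma not_le_S₂' {S₁ S₂ D : Submodule F (Fin 3 → F)} (hne : S₁ ≠ S₂)
    (hS₁ : finrank F S₁ = 2) (hS₂ : finrank F S₂ = 2) (hD1 : finrank F D = 1)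
    (hDS : D ≤ S₁) (hDM : D ≠ S₁ ⊓ S₂) : ¬ D ≤ S₂ := fun hle =>
  hDM (eq_of_dim1_le_dim1 hD1 (finrank_inf_eq_one hne hS₁ hS₂) (le_inf hDS hle))

lemma line_meets_coset {S₂ : Submodule F (Fin 3 → F)} (hS₂ : finrank F S₂ = 2)
    {r : Fin 3 → F} {D : Submodule F (Fin 3 → F)} (hnle : ¬ D ≤ S₂) (x : Fin 3 → F) :
    ∃ w, w ∈ r +ᵥ (D : Set (Fin 3 → F)) ∧ w ∈ x +ᵥ (S₂ : Set (Fin 3 → F)) := by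
  obtain ⟨d, hdD, hdS₂⟩ := SetLike.not_le_iff_exists.1 hnle
  obtain ⟨c, s, hs, hdecomp⟩ := exists_decomp (span_sup_eq_top hS₂ hdS₂) (x - r)
  refine ⟨r + c • d, mem_vadd_sub.2 ?_, mem_vadd_sub.2 ?_⟩
  · have : r + c • d - r = c • d := by abel
    rw [this]; exact D.smul_mem c hdD
  · have hx : x = c • d + s + r := by rw [← hdecomp]; abel
    have : r + c • d - x = -s := by rw [hx]; abel
    rw [this]; exact S₂.neg_mem hs

lemma dim1_eq_span {D : Submodule F (Fin 3 → F)} (hD1 : finrank F D = 1)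
    {d : Fin 3 → F} (hd : d ∈ D) (hd0 : d ≠ 0) : D = Submodule.span F {d} :=
  (eq_of_dim1_le_dim1 (finrank_span_singleton hd0) hD1
    (Submodule.span_le.2 (by simpa using hd))).symm

lemma dim1_le_of_mem {D E : Submodule F (Fin 3 → F)} (hD1 : finrank F D = 1)
    {d : Fin 3 → F} (hd : d ∈ D) (hd0 : d ≠ 0) (hdE : d ∈ E) : D ≤ E := by
  rw [dim1_eq_span hD1 hd hd0]
  apply Submodule.span_le.2
  intro v hv
  rw [Set.mem_singleton_iff] at hv
  subst hv
  exact hdE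

lemma claim1 {q : ℕ} (hq : Fintype.card F = q) (U : Set (Fin 3 → F))
    (hU : U.ncard = q ^ 2) {S₁ S₂ : Submodule F (Fin 3 → F)} (hne : S₁ ≠ S₂)
    (hS₁ : finrank F S₁ = 2) (hS₂ : finrank F S₂ = 2)
    (hnd₁ : ¬ IsDeterminedBy U S₁) (hnd₂ : ¬ IsDeterminedBy U S₂)
    (hnoM : ∀ (r : Fin 3 → F) (E : Submodule F (Fin 3 → F)), finrank F E = 1 →
      E ≤ S₁ → r +ᵥ (E : Set (Fin 3 → F)) ⊆ U → E ≠ S₁ ⊓ S₂)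
    {p p' p₀ : Fin 3 → F} {D D₀ : Submodule F (Fin 3 → F)}
    (hD1 : finrank F D = 1) (hDS : D ≤ S₁)
    (hD₀1 : finrank F D₀ = 1) (hD₀S : D₀ ≤ S₁)
    (hl : p +ᵥ (D : Set (Fin 3 → F)) ⊆ U) (hl' : p' +ᵥ (D : Set (Fin 3 → F)) ⊆ U)
    (hl₀ : p₀ +ᵥ (D₀ : Set (Fin 3 → F)) ⊆ U) (hDD₀ : D₀ ≠ D)
    (hne' : p +ᵥ (D : Set (Fin 3 → F)) ≠ p' +ᵥ (D : Set (Fin 3 → F))) : False := by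
  have hDM : D ≠ S₁ ⊓ S₂ := hnoM p D hD1 hDS hl
  have hD₀M : D₀ ≠ S₁ ⊓ S₂ := hnoM p₀ D₀ hD₀1 hD₀S hl₀
  have hDnle : ¬ D ≤ S₂ := not_le_S₂' hne hS₁ hS₂ hD1 hDS hDM
  have hD₀nle : ¬ D₀ ≤ S₂ := not_le_S₂' hne hS₁ hS₂ hD₀1 hD₀S hD₀M
  have hppS₁ : p' - p ∉ S₁ := by
    intro hmem
    apply hne'
    rw [line_eq_fiber hq U hU hS₁ hnd₁ hD1 hDS hl,
      line_eq_fiber hq U hU hS₁ hnd₁ hD1 hDS hl', vadd_set_eq_of_sub_mem hmem]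
  have hv0 : p' - p ≠ 0 := fun h0 => hppS₁ (h0 ▸ S₁.zero_mem)
  set T := D ⊔ Submodule.span F {p' - p} with hT
  have hWrank : finrank F (Submodule.span F {p' - p}) = 1 := finrank_span_singleton hv0
  have hTle : finrank F T ≤ 2 := finrank_sup_le_two hD1 (le_of_eq hWrank)
  have hTS₂ : finrank F ↥(T ⊓ S₂) ≤ 1 := by
    by_contra hcon
    push_neg at hcon
    have hle2 : finrank F ↥(T ⊓ S₂) ≤ 2 := hS₂ ▸ Submodule.finrank_mono inf_le_right
    have heqS : T ⊓ S₂ = S₂ := Submodule.eq_of_le_of_finrank_eq inf_le_right (by omega)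
    have hS₂T : S₂ ≤ T := heqS ▸ inf_le_left
    have hmono := Submodule.finrank_mono hS₂T
    have hTeq : S₂ = T := Submodule.eq_of_le_of_finrank_eq hS₂T (by omega)
    apply hDnle
    rw [hTeq]
    exact le_sup_left
  have key : ∀ z ∈ p +ᵥ (D : Set (Fin 3 → F)), ∃ r : Fin 3 → F,
      U ∩ (z +ᵥ (S₂ : Set (Fin 3 → F))) = r +ᵥ ((T ⊓ S₂ : Submodule F (Fin 3 → F)) : Set (Fin 3 → F)) ∧
      z ∈ r +ᵥ ((T ⊓ S₂ : Submodule F (Fin 3 → F)) : Set (Fin 3 → F)) ∧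
      finrank F ↥(T ⊓ S₂) = 1 := by
    intro z hz
    obtain ⟨r, E, hE1, hES₂, heq, _⟩ := fiber_eq_line hq U hU hS₂ hnd₂ z
    obtain ⟨w, hw1, hw2⟩ := line_meets_coset hS₂ hDnle (r := p') z
    have hzE : z ∈ r +ᵥ (E : Set (Fin 3 → F)) := by
      rw [← heq]; exact ⟨hl hz, mem_vadd_sub.2 (by simp)⟩
    have hwE : w ∈ r +ᵥ (E : Set (Fin 3 → F)) := by rw [← heq]; exact ⟨hl' hw1, hw2⟩
    have hwz : w - z ∈ E := sub_mem_dir hwE hzE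
    have hwzT : w - z ∈ T := by
      have h1 : w - p' ∈ D := mem_vadd_sub.1 hw1
      have h2 : z - p ∈ D := mem_vadd_sub.1 hz
      have he : w - z = ((w - p') - (z - p)) + (p' - p) := by abel
      rw [he]
      exact T.add_mem ((le_sup_left : D ≤ T) (D.sub_mem h1 h2))
        ((le_sup_right : Submodule.span F {p' - p} ≤ T) (Submodule.mem_span_singleton_self _))
    have hwz0 : w - z ≠ 0 := by
      intro h0
      apply hppS₁
      have hwzeq : w = z := sub_eq_zero.1 h0
      have h1 : w - p' ∈ S₁ := hDS (mem_vadd_sub.1 hw1)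
      have h2 : z - p ∈ S₁ := hDS (mem_vadd_sub.1 hz)
      have he : (z - p) - (w - p') = p' - p := by rw [hwzeq]; abel
      rw [← he]
      exact S₁.sub_mem h2 h1
    have hErnk : E = T ⊓ S₂ := by
      have hle : E ≤ T ⊓ S₂ := by
        rw [dim1_eq_span hE1 hwz hwz0]
        apply Submodule.span_le.2
        intro v hv
        rw [Set.mem_singleton_iff] at hv
        subst hv
        exact ⟨hwzT, hES₂ hwz⟩
      have hmono := Submodule.finrank_mono hle
      exact Submodule.eq_of_le_of_finrank_eq hle (by omega)
    exact ⟨r, by rw [heq, hErnk], by rw [← hErnk]; exact hzE, by rw [← hErnk]; exact hE1⟩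
  -- second phase
  obtain ⟨d₀, hd₀D, hd₀0⟩ := (Submodule.ne_bot_iff D).1
    (by intro hbot; rw [hbot] at hD1; simp at hD1)
  have hzmem : p ∈ p +ᵥ (D : Set (Fin 3 → F)) := mem_vadd_sub.2 (by simp)
  have hz'mem : p + d₀ ∈ p +ᵥ (D : Set (Fin 3 → F)) := mem_vadd_sub.2 (by simpa)
  obtain ⟨r, hr, hzr, hE₀1⟩ := key p hzmem
  obtain ⟨r', hr', hzr', -⟩ := key (p + d₀) hz'mem
  obtain ⟨w, hw1, hw2⟩ := line_meets_coset hS₂ hD₀nle (r := p₀) p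
  obtain ⟨w', hw1', hw2'⟩ := line_meets_coset hS₂ hD₀nle (r := p₀) (p + d₀)
  have hwE : w ∈ r +ᵥ ((T ⊓ S₂ : Submodule F (Fin 3 → F)) : Set (Fin 3 → F)) := by
    rw [← hr]; exact ⟨hl₀ hw1, hw2⟩
  have hw'E : w' ∈ r' +ᵥ ((T ⊓ S₂ : Submodule F (Fin 3 → F)) : Set (Fin 3 → F)) := by
    rw [← hr']; exact ⟨hl₀ hw1', hw2'⟩
  have h1 : w - p ∈ T ⊓ S₂ := sub_mem_dir hwE hzr
  have h2 : w' - (p + d₀) ∈ T ⊓ S₂ := sub_mem_dir hw'E hzr'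
  have h3 : w' - w ∈ D₀ := by
    have := D₀.sub_mem (mem_vadd_sub.1 hw1') (mem_vadd_sub.1 hw1)
    have he : (w' - p₀) - (w - p₀) = w' - w := by abel
    rwa [he] at this
  have hd₀mem : d₀ ∈ D₀ ⊔ (T ⊓ S₂) := by
    have he : d₀ = (w' - w) - ((w' - (p + d₀)) - (w - p)) := by abel
    rw [he]
    exact sub_mem (Submodule.mem_sup_left h3)
      (Submodule.mem_sup_right ((T ⊓ S₂).sub_mem h2 h1))
  have hDle : D ≤ D₀ ⊔ (T ⊓ S₂) := dim1_le_of_mem hD1 hd₀D hd₀0 hd₀mem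
  have hDD₀sup : D ⊔ D₀ = S₁ := by
    have hlt : D < D ⊔ D₀ := lt_of_le_of_ne le_sup_left (fun h0 => hDD₀
      (eq_of_dim1_le_dim1 hD₀1 hD1 (h0 ▸ (le_sup_right : D₀ ≤ D ⊔ D₀))))
    have hgt := Submodule.finrank_lt_finrank_of_lt hlt
    have hle' : finrank F ↥(D ⊔ D₀) ≤ 2 := hS₁ ▸ Submodule.finrank_mono (sup_le hDS hD₀S)
    exact Submodule.eq_of_le_of_finrank_eq (sup_le hDS hD₀S) (by omega)
  have hsup2 : finrank F ↥(D₀ ⊔ (T ⊓ S₂)) ≤ 2 := finrank_sup_le_two hD₀1 hTS₂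
  have hS₁le : S₁ ≤ D₀ ⊔ (T ⊓ S₂) := by
    rw [← hDD₀sup]; exact sup_le hDle le_sup_left
  have hE₀S₁ : T ⊓ S₂ ≤ S₁ := by
    have hmono := Submodule.finrank_mono hS₁le
    have hS₁eq : S₁ = D₀ ⊔ (T ⊓ S₂) :=
      Submodule.eq_of_le_of_finrank_eq hS₁le (by omega)
    rw [hS₁eq]
    exact le_sup_right
  have hE₀M : T ⊓ S₂ = S₁ ⊓ S₂ :=
    eq_of_dim1_le_dim1 hE₀1 (finrank_inf_eq_one hne hS₁ hS₂) (le_inf hE₀S₁ inf_le_right)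
  exact hnoM r (T ⊓ S₂) hE₀1 hE₀S₁ (by rw [← hr]; exact Set.inter_subset_left) hE₀M

end Helpers

/-- Corollary 7 in the paper: assume `U` is not contained in any affine
plane. With two undetermined lines at infinity corresponding to `S₁ ≠ S₂` meeting at
`M = S₁ ∩ S₂`, if `U` contains two non-parallel affine lines with directions in `S₁`,
then any two distinct affine lines contained in `U` with directions in `S₁` have distinct
directions, and none of these directions is `M`. -/
theorem stmt_14 {F : Type*} [Field F] [Fintype F] {q : ℕ}
    (hq : Fintype.card F = q)
    (U : Set (Fin 3 → F)) (hU : U.ncard = q ^ 2)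
    (hplane : ¬ ∃ (x : Fin 3 → F) (P : Submodule F (Fin 3 → F)),
      Module.finrank F P = 2 ∧ U ⊆ x +ᵥ (P : Set (Fin 3 → F)))
    (S₁ S₂ : Submodule F (Fin 3 → F)) (hne : S₁ ≠ S₂)
    (hS₁ : Module.finrank F S₁ = 2) (hS₂ : Module.finrank F S₂ = 2)
    (hnd₁ : ¬ IsDeterminedBy U S₁) (hnd₂ : ¬ IsDeterminedBy U S₂)
    (M : Submodule F (Fin 3 → F)) (hM : M = S₁ ⊓ S₂)
    (h : ∃ (p₁ p₂ : Fin 3 → F) (D₁ D₂ : Submodule F (Fin 3 → F)),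
      Module.finrank F D₁ = 1 ∧ Module.finrank F D₂ = 1 ∧ D₁ ≤ S₁ ∧ D₂ ≤ S₁ ∧
      p₁ +ᵥ (D₁ : Set (Fin 3 → F)) ⊆ U ∧ p₂ +ᵥ (D₂ : Set (Fin 3 → F)) ⊆ U ∧
      D₁ ≠ D₂) :
    (∀ (p p' : Fin 3 → F) (D D' : Submodule F (Fin 3 → F)),
      Module.finrank F D = 1 → Module.finrank F D' = 1 → D ≤ S₁ → D' ≤ S₁ →
      p +ᵥ (D : Set (Fin 3 → F)) ⊆ U → p' +ᵥ (D' : Set (Fin 3 → F)) ⊆ U →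
      p +ᵥ (D : Set (Fin 3 → F)) ≠ p' +ᵥ (D' : Set (Fin 3 → F)) → D ≠ D') ∧
    (∀ (p : Fin 3 → F) (D : Submodule F (Fin 3 → F)),
      Module.finrank F D = 1 → D ≤ S₁ →
      p +ᵥ (D : Set (Fin 3 → F)) ⊆ U → D ≠ M) := by
  subst hM
  obtain ⟨p₁, p₂, D₁, D₂, hD₁1, hD₂1, hD₁S, hD₂S, hl₁, hl₂, hD12⟩ := h
  have hsel : ∀ D : Submodule F (Fin 3 → F), ∃ (r : Fin 3 → F) (E : Submodule F (Fin 3 → F)),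
      Module.finrank F E = 1 ∧ E ≤ S₁ ∧ r +ᵥ (E : Set (Fin 3 → F)) ⊆ U ∧ E ≠ D := by
    intro D
    by_cases hc : D₁ = D
    · exact ⟨p₂, D₂, hD₂1, hD₂S, hl₂, by rw [← hc]; exact hD12.symm⟩
    · exact ⟨p₁, D₁, hD₁1, hD₁S, hl₁, hc⟩
  have hnoM : ∀ (r : Fin 3 → F) (E : Submodule F (Fin 3 → F)), Module.finrank F E = 1 →
      E ≤ S₁ → r +ᵥ (E : Set (Fin 3 → F)) ⊆ U → E ≠ S₁ ⊓ S₂ := by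
    intro r E h1 h2 h3
    obtain ⟨r', E', h'1, h'2, h'3, h'4⟩ := hsel (S₁ ⊓ S₂)
    exact claim2 hq U hU hne hS₁ hS₂ hnd₁ hnd₂ h'1 h'2 h'3 h'4 h1 h2 h3
  refine ⟨?_, fun p D h1 h2 h3 => hnoM p D h1 h2 h3⟩
  intro p p' D D' h1 h1' h2 h2' h3 h3' hline heq
  subst heq
  obtain ⟨r, E, hE1, hES, hEl, hED⟩ := hsel D
  exact claim1 hq U hU hne hS₁ hS₂ hnd₁ hnd₂ hnoM h1 h2 hE1 hES h3 h3' hEl hED hline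
end
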